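/- arXiv:1904.00219 — 5 statements merged into one kernel-verified Lean document; each statement's English description precedes it below -/
import Mathlib

section
/- Let r ∈ ℚ with 0 < r < 1 and n(r) > 1 (so also d(r) > 1 and S_r is atomic). For every nonzero x ∈ S_r that admits more than one factorization, the set of lengths of x is the infinite arithmetic progression L(x) = { min L(x) + k·(d(r) − n(r)) : k ∈ ℕ₀ }. -/
open Finsupp
open scoped ENNReal

/-- The Puiseux monoid (rational cyclic semiring) `S_r`, the additive submonoid of `ℚ`
generated by the nonnegative powers of `r`. -/
def S (r : ℚ) : AddSubmonoid ℚ := AddSubmonoid.closure {x : ℚ | ∃ n : ℕ, x = r ^ n}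

/-- A factorization of `x` over the powers of `r`: a finitely supported choice of
coefficients `α i` with `∑ α i * r ^ i = x`. -/
def IsFactorization (r x : ℚ) (α : ℕ →₀ ℕ) : Prop :=
  (α.sum fun i c => (c : ℚ) * r ^ i) = x

/-- The length of a factorization. -/
def flen (α : ℕ →₀ ℕ) : ℕ := α.sum fun _ c => c

/-- The set of lengths of factorizations of `x` over the powers of `r`. -/
def lengthSet (r x : ℚ) : Set ℕ :=
  {t | ∃ α : ℕ →₀ ℕ, IsFactorization r x α ∧ flen α = t}

/-- An atom of `S_r`: a nonzero element that is not the sum of two nonzero elements. -/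
def IsAtomS (r a : ℚ) : Prop :=
  a ∈ S r ∧ a ≠ 0 ∧ ¬ ∃ y z : ℚ, y ∈ S r ∧ z ∈ S r ∧ y ≠ 0 ∧ z ≠ 0 ∧ a = y + z

/-- The set of lengths of `x` as sums of atoms of `S_r`. -/
def atomLengthSet (r x : ℚ) : Set ℕ :=
  {t | ∃ f : Fin t → ℚ, (∀ i, IsAtomS r (f i)) ∧ ∑ i, f i = x}


def val (r : ℚ) (α : ℕ →₀ ℕ) : ℚ := α.sum fun i c => (c : ℚ) * r ^ i

lemma val_add (r : ℚ) (α β : ℕ →₀ ℕ) : val r (α + β) = val r α + val r β := by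
  unfold val
  rw [Finsupp.sum_add_index]
  · intro i _; simp
  · intro i _ c1 c2; push_cast; ring

lemma val_single (r : ℚ) (i c : ℕ) : val r (Finsupp.single i c) = c * r ^ i := by
  unfold val; rw [Finsupp.sum_single_index]; simp

lemma flen_add (α β : ℕ →₀ ℕ) : flen (α + β) = flen α + flen β := by
  unfold flen
  rw [Finsupp.sum_add_index] <;> simp

lemma flen_single (i c : ℕ) : flen (Finsupp.single i c) = c := by
  unfold flen; rw [Finsupp.sum_single_index rfl]

lemma apply_le_flen (α : ℕ →₀ ℕ) (i : ℕ) : α i ≤ flen α := by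
  unfold flen
  by_cases h : α i = 0
  · simp [h]
  · exact Finset.single_le_sum (fun _ _ => Nat.zero_le _) (Finsupp.mem_support_iff.mpr h)

lemma val_eq_sum_range (r : ℚ) (α : ℕ →₀ ℕ) (N : ℕ) (h : α.support ⊆ Finset.range N) :
    val r α = ∑ j ∈ Finset.range N, (α j : ℚ) * r ^ j :=
  Finsupp.sum_of_support_subset α h _ (by simp)

section core
variable (r : ℚ) (n d : ℕ)

lemma core (hdr : (d:ℚ) * r = n) (hd : d ≠ 0)
    (α β : ℕ →₀ ℕ) (hval : val r α = val r β) (N : ℕ)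
    (hα : α.support ⊆ Finset.range (N+1)) (hβ : β.support ⊆ Finset.range (N+1)) :
    ∑ j ∈ Finset.range (N+1), ((α j : ℤ) - β j) * n ^ j * d ^ (N - j) = 0 := by
  have key : ∀ γ : ℕ →₀ ℕ, γ.support ⊆ Finset.range (N+1) →
      (d:ℚ)^N * val r γ = ∑ j ∈ Finset.range (N+1), (γ j : ℚ) * n ^ j * d ^ (N - j) := by
    intro γ hγ
    rw [val_eq_sum_range r γ (N+1) hγ, Finset.mul_sum]
    refine Finset.sum_congr rfl fun j hj => ?_
    have hjN : j ≤ N := Nat.lt_succ_iff.mp (Finset.mem_range.mp hj)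
    have h1 : (d:ℚ)^N = d^j * d^(N-j) := by rw [← pow_add]; congr 1; omega
    have h2 : (d:ℚ)^j * r^j = (n:ℚ)^j := by rw [← mul_pow, hdr]
    calc (d:ℚ)^N * ((γ j:ℚ) * r ^ j) = (γ j:ℚ) * ((d:ℚ)^j * r^j) * (d:ℚ)^(N-j) := by
          rw [h1]; ring
      _ = (γ j:ℚ) * n^j * d^(N-j) := by rw [h2]
  have hq : ∑ j ∈ Finset.range (N+1), ((α j:ℚ) - β j) * n^j * d^(N-j) = 0 := by
    have e : ∑ j ∈ Finset.range (N+1), ((α j:ℚ) - β j) * n^j * d^(N-j)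
        = (∑ j ∈ Finset.range (N+1), (α j:ℚ) * n^j * d^(N-j))
          - ∑ j ∈ Finset.range (N+1), (β j:ℚ) * n^j * d^(N-j) := by
      rw [← Finset.sum_sub_distrib]; exact Finset.sum_congr rfl fun j _ => by ring
    rw [e, ← key α hα, ← key β hβ, hval, sub_self]
  exact_mod_cast hq

end core

lemma dvd_min_diff (n d : ℕ) (hn : n ≠ 0) (hcop : Nat.Coprime n d)
    (N i0 : ℕ) (hi0 : i0 ≤ N) (c : ℕ → ℤ)
    (hsum : ∑ j ∈ Finset.range (N+1), c j * n ^ j * d ^ (N - j) = 0)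
    (hlt : ∀ j < i0, c j = 0) : (n:ℤ) ∣ c i0 := by
  have hmem : i0 ∈ Finset.range (N+1) := Finset.mem_range.mpr (by omega)
  rw [← Finset.add_sum_erase _ _ hmem] at hsum
  have hdvd : (n:ℤ)^(i0+1) ∣ ∑ j ∈ (Finset.range (N+1)).erase i0, c j * n ^ j * d ^ (N - j) := by
    refine Finset.dvd_sum fun j hj => ?_
    rcases lt_or_ge j i0 with h | h
    · rw [hlt j h]; simp
    · have hne : j ≠ i0 := (Finset.mem_erase.mp hj).1
      exact Dvd.dvd.mul_right (Dvd.dvd.mul_left (pow_dvd_pow _ (by omega)) _) _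
  have h2 : (n:ℤ)^(i0+1) ∣ (c i0 * d ^ (N - i0)) * n ^ i0 := by
    have e : (c i0 * d ^ (N - i0)) * n ^ i0
        = -(∑ j ∈ (Finset.range (N+1)).erase i0, c j * n ^ j * d ^ (N - j)) := by
      linarith [hsum]
    rw [e]; exact hdvd.neg_right
  have hpow : (n:ℤ)^i0 ≠ 0 := pow_ne_zero _ (by exact_mod_cast hn)
  rw [pow_succ, mul_comm ((n:ℤ)^i0) (n:ℤ)] at h2
  have h3 : (n:ℤ) ∣ c i0 * d ^ (N - i0) := (mul_dvd_mul_iff_right hpow).mp h2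
  exact (Nat.isCoprime_iff_coprime.mpr hcop).pow_right.dvd_of_dvd_mul_right h3

lemma dvd_max_diff (n d : ℕ) (hd : d ≠ 0) (hcop : Nat.Coprime d n)
    (N i1 : ℕ) (hi1 : i1 ≤ N) (c : ℕ → ℤ)
    (hsum : ∑ j ∈ Finset.range (N+1), c j * n ^ j * d ^ (N - j) = 0)
    (hgt : ∀ j, i1 < j → c j = 0) : (d:ℤ) ∣ c i1 := by
  have hmem : i1 ∈ Finset.range (N+1) := Finset.mem_range.mpr (by omega)
  rw [← Finset.add_sum_erase _ _ hmem] at hsum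
  have hdvd : (d:ℤ)^(N-i1+1) ∣ ∑ j ∈ (Finset.range (N+1)).erase i1, c j * n ^ j * d ^ (N - j) := by
    refine Finset.dvd_sum fun j hj => ?_
    rcases lt_or_ge i1 j with h | h
    · rw [hgt j h]; simp
    · have hne : j ≠ i1 := (Finset.mem_erase.mp hj).1
      exact Dvd.dvd.mul_left (pow_dvd_pow _ (by omega)) _
  have h2 : (d:ℤ)^(N-i1+1) ∣ (c i1 * n ^ i1) * d ^ (N - i1) := by
    have e : (c i1 * n ^ i1) * d ^ (N - i1)
        = -(∑ j ∈ (Finset.range (N+1)).erase i1, c j * n ^ j * d ^ (N - j)) := by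
      linarith [hsum]
    rw [e]; exact hdvd.neg_right
  have hpow : (d:ℤ)^(N-i1) ≠ 0 := pow_ne_zero _ (by exact_mod_cast hd)
  rw [pow_succ, mul_comm ((d:ℤ)^(N-i1)) (d:ℤ)] at h2
  have h3 : (d:ℤ) ∣ c i1 * n ^ i1 := (mul_dvd_mul_iff_right hpow).mp h2
  exact (Nat.isCoprime_iff_coprime.mpr hcop).pow_right.dvd_of_dvd_mul_right h3

section main
variable (r : ℚ) (n d : ℕ)

lemma support_bound (α β : ℕ →₀ ℕ) (i : ℕ) :
    ∃ N, i ≤ N ∧ α.support ⊆ Finset.range (N+1) ∧ β.support ⊆ Finset.range (N+1) := by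
  refine ⟨i + α.support.sup id + β.support.sup id, by omega, ?_, ?_⟩ <;>
    · intro j hj
      have := Finset.le_sup (f := id) hj
      simp only [id] at this
      exact Finset.mem_range.mpr (by omega)

lemma move_up (hdr : (d:ℚ) * r = n) (hnd : n ≤ d) (α : ℕ →₀ ℕ) (i : ℕ) (h : n ≤ α i) :
    ∃ α', val r α' = val r α ∧ flen α' = flen α + (d - n) ∧ d ≤ α' (i+1) := by
  have hle : Finsupp.single i n ≤ α := Finsupp.single_le_iff.mpr h
  have hsplit : (α - Finsupp.single i n) + Finsupp.single i n = α := tsub_add_cancel_of_le hle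
  refine ⟨(α - Finsupp.single i n) + Finsupp.single (i+1) d, ?_, ?_, ?_⟩
  · conv_rhs => rw [← hsplit]
    rw [val_add, val_add, val_single, val_single]
    congr 1
    rw [pow_succ]
    calc (d:ℚ) * (r^i * r) = ((d:ℚ) * r) * r^i := by ring
      _ = (n:ℚ) * r^i := by rw [hdr]
  · rw [flen_add, flen_single]
    conv_rhs => rw [← hsplit]
    rw [flen_add, flen_single]
    omega
  · rw [Finsupp.add_apply, Finsupp.single_apply]
    simp

lemma move_down (hdr : (d:ℚ) * r = n) (hnd : n ≤ d) (α : ℕ →₀ ℕ) (i : ℕ) (h : d ≤ α (i+1)) :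
    ∃ α', val r α' = val r α ∧ flen α = flen α' + (d - n) := by
  have hle : Finsupp.single (i+1) d ≤ α := Finsupp.single_le_iff.mpr h
  have hsplit : (α - Finsupp.single (i+1) d) + Finsupp.single (i+1) d = α := tsub_add_cancel_of_le hle
  refine ⟨(α - Finsupp.single (i+1) d) + Finsupp.single i n, ?_, ?_⟩
  · conv_rhs => rw [← hsplit]
    rw [val_add, val_add, val_single, val_single]
    congr 1
    rw [pow_succ]
    calc (n:ℚ) * r^i = ((d:ℚ) * r) * r^i := by rw [hdr]
      _ = (d:ℚ) * (r^i * r) := by ring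
  · conv_lhs => rw [← hsplit]
    rw [flen_add, flen_single, flen_add, flen_single]
    omega

lemma up_forever (hdr : (d:ℚ) * r = n) (hnd : n ≤ d) (α : ℕ →₀ ℕ) (i : ℕ) (h : n ≤ α i) :
    ∀ k, ∃ γ, val r γ = val r α ∧ flen γ = flen α + k * (d - n) := by
  have main : ∀ k, ∃ γ, val r γ = val r α ∧ flen γ = flen α + k * (d - n) ∧ ∃ j, n ≤ γ j := by
    intro k
    induction k with
    | zero => exact ⟨α, rfl, by simp, i, h⟩
    | succ k ih =>
      obtain ⟨γ, hv, hl, j, hj⟩ := ih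
      obtain ⟨γ', hv', hl', hd'⟩ := move_up r n d hdr hnd γ j hj
      exact ⟨γ', by rw [hv', hv], by rw [hl', hl]; ring, j+1, le_trans hnd hd'⟩
  exact fun k => (main k).imp fun γ hγ => ⟨hγ.1, hγ.2.1⟩

lemma reduce (hdr : (d:ℚ) * r = n) (hnd : n < d) :
    ∀ m (α : ℕ →₀ ℕ), flen α ≤ m →
    ∃ R k, val r R = val r α ∧ (∀ i, R (i+1) < d) ∧ flen α = flen R + k * (d - n) ∧
      ∀ j ≤ k, ∃ γ, val r γ = val r α ∧ flen γ = flen R + j * (d - n) := by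
  intro m
  induction m with
  | zero =>
    intro α hα
    refine ⟨α, 0, rfl, fun i => ?_, by simp, ?_⟩
    · have := apply_le_flen α (i+1); omega
    · intro j hj; exact ⟨α, rfl, by simp [Nat.le_zero.mp hj]⟩
  | succ m ih =>
    intro α hα
    by_cases hred : ∀ i, α (i+1) < d
    · refine ⟨α, 0, rfl, hred, by simp, ?_⟩
      intro j hj; exact ⟨α, rfl, by simp [Nat.le_zero.mp hj]⟩
    · push_neg at hred
      obtain ⟨i, hi⟩ := hred
      obtain ⟨α', hv', hl'⟩ := move_down r n d hdr (le_of_lt hnd) α i hi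
      have hlen' : flen α' ≤ m := by omega
      obtain ⟨R, k, hRv, hRred, hRl, hRall⟩ := ih α' hlen'
      have hmul : (k+1)*(d-n) = k*(d-n) + (d-n) := by ring
      refine ⟨R, k+1, by rw [hRv, hv'], hRred, by omega, ?_⟩
      intro j hj
      rcases Nat.lt_succ_iff_lt_or_eq.mp (Nat.lt_succ_of_le hj) with h | h
      · obtain ⟨γ, hγv, hγl⟩ := hRall j (by omega)
        exact ⟨γ, by rw [hγv, hv'], hγl⟩
      · subst h
        exact ⟨α, rfl, by omega⟩

end main

section big
variable (r : ℚ) (n d : ℕ)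

lemma diff_nonempty (α β : ℕ →₀ ℕ) (hne : α ≠ β) :
    ((α.support ∪ β.support).filter (fun i => α i ≠ β i)).Nonempty := by
  obtain ⟨i, hi⟩ : ∃ i, α i ≠ β i := by
    by_contra h
    push_neg at h
    exact hne (Finsupp.ext h)
  refine ⟨i, Finset.mem_filter.mpr ⟨?_, hi⟩⟩
  rcases eq_or_ne (α i) 0 with h0 | h0
  · exact Finset.mem_union_right _ (Finsupp.mem_support_iff.mpr (by omega))
  · exact Finset.mem_union_left _ (Finsupp.mem_support_iff.mpr h0)

lemma exists_big (hdr : (d:ℚ) * r = n) (hn1 : 1 < n) (hd0 : d ≠ 0) (hcop : Nat.Coprime n d)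
    (α β : ℕ →₀ ℕ) (hval : val r α = val r β) (hne : α ≠ β) :
    ∃ i, n ≤ α i ∨ n ≤ β i := by
  set D := (α.support ∪ β.support).filter (fun i => α i ≠ β i) with hD
  have hDne := diff_nonempty α β hne
  set i0 := D.min' hDne with hi0
  have hi0mem : i0 ∈ D := D.min'_mem hDne
  have hi0ne : α i0 ≠ β i0 := (Finset.mem_filter.mp hi0mem).2
  have hlt : ∀ j < i0, α j = β j := by
    intro j hj
    by_contra hcon
    have : j ∈ D := by
      refine Finset.mem_filter.mpr ⟨?_, hcon⟩
      rcases eq_or_ne (α j) 0 with h0 | h0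
      · exact Finset.mem_union_right _ (Finsupp.mem_support_iff.mpr (by omega))
      · exact Finset.mem_union_left _ (Finsupp.mem_support_iff.mpr h0)
    have := D.min'_le j this
    omega
  obtain ⟨N, hNi, hNα, hNβ⟩ := support_bound α β i0
  have hsum := core r n d hdr hd0 α β hval N hNα hNβ
  have hdvd : (n:ℤ) ∣ ((α i0 : ℤ) - β i0) :=
    dvd_min_diff n d (by omega) hcop N i0 hNi (fun j => (α j : ℤ) - β j) hsum
      (fun j hj => by simp [hlt j hj])
  have hne0 : ((α i0 : ℤ) - β i0) ≠ 0 := by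
    intro h; apply hi0ne; omega
  refine ⟨i0, ?_⟩
  rcases lt_or_gt_of_ne hne0 with h | h
  · have := Int.le_of_dvd (by omega) (hdvd.neg_right)
    right; omega
  · have := Int.le_of_dvd h hdvd
    left; omega

lemma reduced_unique (hdr : (d:ℚ) * r = n) (hn1 : 1 < n) (hd0 : d ≠ 0) (hcop : Nat.Coprime n d)
    (α β : ℕ →₀ ℕ) (hval : val r α = val r β)
    (hα : ∀ i, α (i+1) < d) (hβ : ∀ i, β (i+1) < d) : α = β := by
  by_contra hne
  set D := (α.support ∪ β.support).filter (fun i => α i ≠ β i) with hD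
  have hDne := diff_nonempty α β hne
  set i1 := D.max' hDne with hi1
  have hi1mem : i1 ∈ D := D.max'_mem hDne
  have hi1ne : α i1 ≠ β i1 := (Finset.mem_filter.mp hi1mem).2
  have hgt : ∀ j, i1 < j → α j = β j := by
    intro j hj
    by_contra hcon
    have : j ∈ D := by
      refine Finset.mem_filter.mpr ⟨?_, hcon⟩
      rcases eq_or_ne (α j) 0 with h0 | h0
      · exact Finset.mem_union_right _ (Finsupp.mem_support_iff.mpr (by omega))
      · exact Finset.mem_union_left _ (Finsupp.mem_support_iff.mpr h0)
    have := D.le_max' j this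
    omega
  obtain ⟨N, hNi, hNα, hNβ⟩ := support_bound α β i1
  have hsum := core r n d hdr hd0 α β hval N hNα hNβ
  rcases Nat.eq_zero_or_pos i1 with h10 | h1pos
  · -- i1 = 0 : all other coords agree, so c 0 * d^N = 0
    have honly : ∀ j ∈ Finset.range (N+1), j ≠ 0 →
        ((α j : ℤ) - β j) * n ^ j * d ^ (N - j) = 0 := by
      intro j _ hj0
      rw [hgt j (by omega)]; ring
    rw [Finset.sum_eq_single 0 honly (by intro h; exact absurd (Finset.mem_range.mpr (by omega)) h)] at hsum
    simp only [pow_zero, Nat.sub_zero, mul_one] at hsum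
    have hdN : ((d:ℤ))^N ≠ 0 := pow_ne_zero _ (by exact_mod_cast hd0)
    have : (α 0 : ℤ) - β 0 = 0 := by
      rcases mul_eq_zero.mp hsum with h | h
      · exact h
      · exact absurd h hdN
    rw [h10] at hi1ne
    omega
  · have hdvd : (d:ℤ) ∣ ((α i1 : ℤ) - β i1) :=
      dvd_max_diff n d hd0 hcop.symm N i1 hNi (fun j => (α j : ℤ) - β j) hsum
        (fun j hj => by simp [hgt j hj])
    obtain ⟨i, hi1e⟩ : ∃ i, i1 = i + 1 := ⟨i1 - 1, by omega⟩
    have h1 := hα i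
    have h2 := hβ i
    rw [hi1e] at hi1ne hdvd
    have hne0 : ((α (i+1) : ℤ) - β (i+1)) ≠ 0 := by intro h; apply hi1ne; omega
    rcases lt_or_gt_of_ne hne0 with h | h
    · have := Int.le_of_dvd (by omega) hdvd.neg_right
      omega
    · have := Int.le_of_dvd h hdvd
      omega

lemma val_zero : val r 0 = 0 := by unfold val; simp

lemma exists_fact (x : ℚ) (hx : x ∈ AddSubmonoid.closure {y : ℚ | ∃ k : ℕ, y = r ^ k}) :
    ∃ α : ℕ →₀ ℕ, val r α = x := by
  induction hx using AddSubmonoid.closure_induction with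
  | mem y hy =>
    obtain ⟨k, rfl⟩ := hy
    exact ⟨Finsupp.single k 1, by rw [val_single]; simp⟩
  | zero => exact ⟨0, val_zero r⟩
  | add y z _ _ hy hz =>
    obtain ⟨a, ha⟩ := hy
    obtain ⟨b, hb⟩ := hz
    exact ⟨a + b, by rw [val_add, ha, hb]⟩

end big


lemma isFact_iff (r x : ℚ) (α : ℕ →₀ ℕ) : IsFactorization r x α ↔ val r α = x := Iff.rfl

theorem stmt0 (r : ℚ) (h0 : 0 < r) (h1 : r < 1) (hn : 1 < r.num)
    (x : ℚ) (hx : x ∈ S r) (hx0 : x ≠ 0)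
    (hm : ∃ α β : ℕ →₀ ℕ, IsFactorization r x α ∧ IsFactorization r x β ∧ α ≠ β) :
    lengthSet r x =
      {t : ℕ | ∃ k : ℕ, t = sInf (lengthSet r x) + k * (r.den - r.num.toNat)} := by
  have hnum_pos : 0 < r.num := Rat.num_pos.mpr h0
  have hn_cast : (r.num.toNat : ℤ) = r.num := Int.toNat_of_nonneg hnum_pos.le
  set n := r.num.toNat with hn_def
  set d := r.den with hd_def
  have hdr : (d:ℚ) * r = (n:ℚ) := by
    rw [mul_comm, Rat.mul_den_eq_num]
    rw [← hn_cast]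
    push_cast
    ring
  have hn1 : 1 < n := by omega
  have hnd : n < d := by
    have := Rat.lt_one_iff_num_lt_denom.mpr h1
    omega
  have hd0 : d ≠ 0 := r.den_pos.ne'
  have hcop : Nat.Coprime n d := by
    have hab : r.num.natAbs = n := by omega
    have := r.reduced
    rwa [hab] at this
  obtain ⟨A, B, hA, hB, hAB⟩ := hm
  have hAv : val r A = x := hA
  have hBv : val r B = x := hB
  -- the unique reduced factorization
  obtain ⟨R0, k0, hR0v, hR0red, hR0l, hR0all⟩ := reduce r n d hdr hnd (flen A) A le_rfl
  have hR0x : val r R0 = x := by rw [hR0v, hAv]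
  have hmem0 : flen R0 ∈ lengthSet r x := ⟨R0, hR0x, rfl⟩
  have hlb : ∀ t ∈ lengthSet r x, flen R0 ≤ t := by
    rintro t ⟨γ, hγ, rfl⟩
    have hγv : val r γ = x := hγ
    obtain ⟨R', k', hR'v, hR'red, hR'l, _⟩ := reduce r n d hdr hnd (flen γ) γ le_rfl
    have hRR : R' = R0 :=
      reduced_unique r n d hdr hn1 hd0 hcop R' R0 (by rw [hR'v, hγv, hR0x]) hR'red hR0red
    rw [hRR] at hR'l
    rw [hR'l]
    exact Nat.le_add_right _ _
  have hsinf : sInf (lengthSet r x) = flen R0 :=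
    le_antisymm (Nat.sInf_le hmem0) (le_csInf ⟨_, hmem0⟩ hlb)
  ext t
  simp only [Set.mem_setOf_eq]
  constructor
  · rintro ⟨γ, hγ, rfl⟩
    have hγv : val r γ = x := hγ
    obtain ⟨R', k', hR'v, hR'red, hR'l, _⟩ := reduce r n d hdr hnd (flen γ) γ le_rfl
    have hRR : R' = R0 :=
      reduced_unique r n d hdr hn1 hd0 hcop R' R0 (by rw [hR'v, hγv, hR0x]) hR'red hR0red
    rw [hRR] at hR'l
    exact ⟨k', by rw [hsinf, hR'l]⟩
  · rintro ⟨k, rfl⟩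
    rw [hsinf]
    obtain ⟨i, hbig⟩ := exists_big r n d hdr hn1 hd0 hcop A B (by rw [hAv, hBv]) hAB
    obtain ⟨γ0, hγ0v, hγ0i⟩ : ∃ γ0, val r γ0 = x ∧ n ≤ γ0 i := by
      rcases hbig with h | h
      · exact ⟨A, hAv, h⟩
      · exact ⟨B, hBv, h⟩
    obtain ⟨R', m, hR'v, hR'red, hR'l, hall⟩ := reduce r n d hdr hnd (flen γ0) γ0 le_rfl
    have hRR : R' = R0 :=
      reduced_unique r n d hdr hn1 hd0 hcop R' R0 (by rw [hR'v, hγ0v, hR0x]) hR'red hR0red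
    rw [hRR] at hR'l hall
    rcases le_or_gt k m with hk | hk
    · obtain ⟨γ, hγv, hγl⟩ := hall k hk
      exact ⟨γ, (isFact_iff r x γ).mpr (by rw [hγv, hγ0v]), hγl⟩
    · obtain ⟨γ, hγv, hγl⟩ := up_forever r n d hdr hnd.le γ0 i hγ0i (k - m)
      refine ⟨γ, (isFact_iff r x γ).mpr (by rw [hγv, hγ0v]), ?_⟩
      have hmul : m * (d - n) + (k - m) * (d - n) = k * (d - n) := by
        rw [← add_mul]
        congr 1
        omega
      omega
end

section
/- Let r ∈ ℚ_{>0} be such that S_r is atomic (i.e., r = 1 or n(r) > 1). Then L(x) is a finite set for every nonzero x ∈ S_r if and only if r ≥ 1. (In other words, the atomic monoid S_r is a BF-monoid if and only if r ≥ 1.) -/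
open Finsupp
open scoped ENNReal

/-- Every nonzero element of `S r` is at least `1` when `1 ≤ r`. -/
lemma one_le_of_mem_S {r : ℚ} (hr : 1 ≤ r) {x : ℚ} (hx : x ∈ S r) (hx0 : x ≠ 0) :
    1 ≤ x := by
  obtain ⟨L, hL, hs⟩ := AddSubmonoid.exists_list_of_mem_closure hx
  have h1 : ∀ y ∈ L, (1 : ℚ) ≤ y := by
    intro y hy
    obtain ⟨m, rfl⟩ := hL y hy
    exact one_le_pow₀ hr
  cases L with
  | nil => exact absurd hs.symm hx0
  | cons a L' =>
    have hle := List.single_le_sum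
      (fun y hy => zero_le_one.trans (h1 y hy)) a (List.mem_cons_self)
    rw [hs] at hle
    exact (h1 a (List.mem_cons_self)).trans hle

/-- Extract exponent lists from lists of powers of `r`. -/
lemma exists_exponent_list (r : ℚ) (L : List ℚ) (h : ∀ x ∈ L, ∃ n : ℕ, x = r ^ n) :
    ∃ l : List ℕ, L = l.map (r ^ ·) := by
  induction L with
  | nil => exact ⟨[], rfl⟩
  | cons a L ih =>
    obtain ⟨n, hn⟩ := h a (List.mem_cons_self)
    obtain ⟨l, hl⟩ := ih fun x hx => h x (List.mem_cons_of_mem _ hx)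
    exact ⟨n :: l, by simp [hn, ← hl]⟩

/-- The key arithmetic lemma: if `0 < r < 1` and `n(r) > 1`, then a sum of powers of `r`
equal to `r ^ k` has at most one summand. -/
lemma key_lemma {r : ℚ} (h0 : 0 < r) (h1 : r < 1) (hn : 1 < r.num)
    (l : List ℕ) (k : ℕ) (hsum : (l.map (r ^ ·)).sum = r ^ k) : l.length ≤ 1 := by
  by_contra hlen
  push_neg at hlen
  have hge : ∀ e ∈ l, k ≤ e := by
    intro e he
    by_contra hek
    push_neg at hek
    have hterm : r ^ e ≤ (l.map (r ^ ·)).sum := by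
      refine List.single_le_sum ?_ _ (List.mem_map_of_mem he)
      intro x hx
      obtain ⟨m, -, rfl⟩ := List.mem_map.mp hx
      positivity
    rw [hsum] at hterm
    exact absurd hterm (not_le.mpr (pow_lt_pow_right_of_lt_one₀ h0 h1 hek))
  by_cases hk : k ∈ l
  · -- remove one copy of `r ^ k`; the rest sums to zero but has a positive member
    have hperm : List.Perm l (k :: l.erase k) := List.perm_cons_erase hk
    have hps : ((k :: l.erase k).map (r ^ ·)).sum = r ^ k := by
      rw [← hsum]
      exact (List.Perm.sum_eq (hperm.map _)).symm
    simp only [List.map_cons, List.sum_cons] at hps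
    have hz : (((l.erase k).map (r ^ ·)).sum : ℚ) = 0 := by linarith
    have hne : l.erase k ≠ [] := by
      intro h
      have h2 := l.length_erase_of_mem hk
      rw [h] at h2
      simp at h2
      omega
    obtain ⟨e, he⟩ := List.exists_mem_of_ne_nil _ hne
    have hpos : (0 : ℚ) < r ^ e := by positivity
    have hle : r ^ e ≤ (((l.erase k).map (r ^ ·)).sum : ℚ) := by
      refine List.single_le_sum ?_ _ (List.mem_map_of_mem he)
      intro x hx
      obtain ⟨m, -, rfl⟩ := List.mem_map.mp hx
      positivity
    rw [hz] at hle
    linarith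
  · -- all exponents are `> k`; derive a divisibility contradiction
    have hgt : ∀ e ∈ l, k + 1 ≤ e := by
      intro e he
      rcases (hge e he).lt_or_eq with h | h
      · omega
      · exact absurd (h ▸ he) hk
    obtain ⟨e0, he0⟩ := List.exists_mem_of_ne_nil l
      (by intro h; rw [h] at hlen; simp at hlen)
    set n : ℤ := r.num with hn'
    set d : ℤ := (r.den : ℤ) with hd'
    have hd0 : (0 : ℚ) < (d : ℚ) := by
      rw [hd']
      exact_mod_cast r.pos
    have hrnd : r = (n : ℚ) / (d : ℚ) := by
      rw [hn', hd']
      exact_mod_cast (Rat.num_div_den r).symm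
    set M : ℕ := l.sum with hM'
    have hM : ∀ e ∈ l, e ≤ M := fun e he => List.le_sum_of_mem he
    have hkM : k + 1 ≤ M := le_trans (hgt e0 he0) (hM e0 he0)
    set F : ℕ → ℤ := fun e => n ^ e * d ^ (M - e) with hF
    have hcast : ∀ e ≤ M, ((F e : ℤ) : ℚ) = (d : ℚ) ^ M * r ^ e := by
      intro e heM
      have hdne : ((d : ℚ)) ^ e ≠ 0 := by positivity
      rw [hF]
      push_cast
      rw [hrnd, div_pow,
        show ((d : ℚ)) ^ M = (d : ℚ) ^ (M - e) * (d : ℚ) ^ e by rw [← pow_add]; congr 1; omega]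
      field_simp
    have hQ : (((l.map F).sum : ℤ) : ℚ) = ((F k : ℤ) : ℚ) := by
      rw [Int.cast_list_sum, List.map_map]
      have hmaps : (l.map fun e => ((F e : ℤ) : ℚ)) = l.map fun e => (d : ℚ) ^ M * r ^ e :=
        List.map_congr_left fun e he => hcast e (hM e he)
      calc ((l.map fun e => ((F e : ℤ) : ℚ))).sum
          = (l.map fun e => (d : ℚ) ^ M * r ^ e).sum := by rw [hmaps]
        _ = (d : ℚ) ^ M * (l.map fun e => r ^ e).sum := List.sum_map_mul_left l _ _
        _ = (d : ℚ) ^ M * r ^ k := by rw [hsum]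
        _ = ((F k : ℤ) : ℚ) := (hcast k (by omega)).symm
    have hZ : (l.map F).sum = F k := Int.cast_injective hQ
    have hdvd : n ^ (k + 1) ∣ (l.map F).sum := by
      refine List.dvd_sum ?_
      intro x hx
      obtain ⟨e, he, rfl⟩ := List.mem_map.mp hx
      exact Dvd.dvd.mul_right (pow_dvd_pow n (hgt e he)) _
    rw [hZ, hF] at hdvd
    simp only [pow_succ] at hdvd
    have hnk : (0 : ℤ) < n ^ k := pow_pos (by omega) k
    have hdvd2 : n ∣ d ^ (M - k) := by
      have := (mul_dvd_mul_iff_left (a := n ^ k)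
        (by positivity : (n : ℤ) ^ k ≠ 0)).mp hdvd
      exact this
    -- coprimality contradiction
    have hcop : Nat.Coprime r.num.natAbs r.den := r.reduced
    have hcop2 : Nat.Coprime r.num.natAbs (r.den ^ (M - k)) := hcop.pow_right _
    have hdvd3 : r.num.natAbs ∣ r.den ^ (M - k) := by
      have h4 := Int.natAbs_dvd_natAbs.mpr hdvd2
      simpa [hd', Int.natAbs_pow] using h4
    have : r.num.natAbs = 1 := hcop2.eq_one_of_dvd hdvd3
    omega

/-- Each power of `r` is an atom of `S r` when `0 < r < 1` and `n(r) > 1`. -/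
lemma isAtom_pow {r : ℚ} (h0 : 0 < r) (h1 : r < 1) (hn : 1 < r.num) (k : ℕ) :
    IsAtomS r (r ^ k) := by
  refine ⟨AddSubmonoid.subset_closure ⟨k, rfl⟩, (pow_pos h0 k).ne', ?_⟩
  rintro ⟨y, z, hy, hz, hy0, hz0, hsum⟩
  obtain ⟨Ly, hLy, hLys⟩ := AddSubmonoid.exists_list_of_mem_closure hy
  obtain ⟨Lz, hLz, hLzs⟩ := AddSubmonoid.exists_list_of_mem_closure hz
  obtain ⟨ly, hly⟩ := exists_exponent_list r Ly hLy
  obtain ⟨lz, hlz⟩ := exists_exponent_list r Lz hLz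
  have hsum2 : ((ly ++ lz).map (r ^ ·)).sum = r ^ k := by
    rw [List.map_append, List.sum_append, ← hly, ← hlz, hLys, hLzs, ← hsum]
  have hlen := key_lemma h0 h1 hn (ly ++ lz) k hsum2
  have hy' : ly ≠ [] := by
    rintro rfl
    rw [List.map_nil] at hly
    rw [hly] at hLys
    exact hy0 hLys.symm
  have hz' : lz ≠ [] := by
    rintro rfl
    rw [List.map_nil] at hlz
    rw [hlz] at hLzs
    exact hz0 hLzs.symm
  rw [List.length_append] at hlen
  have := List.length_pos_iff.mpr hy'
  have := List.length_pos_iff.mpr hz'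
  omega

/-- Membership in the atom length set from a list of atoms. -/
lemma mem_atomLengthSet_of_list (r x : ℚ) (L : List ℚ) (hat : ∀ a ∈ L, IsAtomS r a)
    (hs : L.sum = x) : L.length ∈ atomLengthSet r x := by
  refine ⟨fun i => L.get i, fun i => hat _ (L.get_mem i), ?_⟩
  rw [← hs]
  simpa using Fin.sum_univ_get L

theorem stmt2 (r : ℚ) (h0 : 0 < r) (hat : r = 1 ∨ 1 < r.num) :
    (∀ x ∈ S r, x ≠ 0 → (atomLengthSet r x).Finite) ↔ 1 ≤ r := by
  constructor
  · -- if all atom length sets are finite, then `1 ≤ r`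
    intro H
    by_contra hr1
    push_neg at hr1
    have hn : 1 < r.num := by
      rcases hat with h | h
      · rw [h] at hr1; exact absurd hr1 (lt_irrefl 1)
      · exact h
    set n : ℕ := r.num.toNat with hn'
    set d : ℕ := r.den with hd'
    have hn2 : 2 ≤ n := by omega
    have hnd : n < d := by
      have := Rat.lt_one_iff_num_lt_denom.mpr hr1
      omega
    have hnum : ((n : ℕ) : ℤ) = r.num := Int.toNat_of_nonneg (by omega)
    have hdr : (d : ℚ) * r = (n : ℚ) := by
      have h6 : ((n : ℕ) : ℚ) = ((r.num : ℤ) : ℚ) := by exact_mod_cast hnum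
      have hdq : ((r.den : ℚ)) ≠ 0 := by exact_mod_cast r.den_ne_zero
      rw [h6, hd']
      calc (r.den : ℚ) * r = (r.den : ℚ) * ((r.num : ℚ) / (r.den : ℚ)) := by
            rw [Rat.num_div_den]
        _ = (r.num : ℚ) := by field_simp
    have hx : (n : ℚ) ∈ S r := by
      have h1m : (1 : ℚ) ∈ S r := AddSubmonoid.subset_closure ⟨0, (pow_zero r).symm⟩
      have h2m := nsmul_mem h1m n
      simpa [nsmul_eq_mul] using h2m
    set Mk : ℕ → Multiset ℚ := fun k =>
      Multiset.replicate d (r ^ (k + 1)) +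
        (Multiset.range k).bind (fun j => Multiset.replicate (d - n) (r ^ (j + 1))) with hMk
    have hcsub : ((d - n : ℕ) : ℚ) = (d : ℚ) - (n : ℚ) := by
      push_cast [Nat.cast_sub (le_of_lt hnd)]
      ring
    have hsumM : ∀ k, (Mk k).sum = (n : ℚ) := by
      intro k
      induction k with
      | zero =>
        simp [hMk, Multiset.sum_replicate, nsmul_eq_mul, pow_one, hdr]
      | succ k ih =>
        rw [hMk] at ih ⊢
        simp only [Multiset.range_succ, Multiset.cons_bind, Multiset.sum_add,
          Multiset.sum_replicate, nsmul_eq_mul, hcsub] at ih ⊢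
        linear_combination ih + r ^ (k + 1) * hdr
    have hcardM : ∀ k, Multiset.card (Mk k) = d + k * (d - n) := by
      intro k
      induction k with
      | zero => simp [hMk]
      | succ k ih =>
        rw [hMk] at ih ⊢
        simp only [Multiset.range_succ, Multiset.cons_bind, Multiset.card_add,
          Multiset.card_replicate] at ih ⊢
        have h9 : (k + 1) * (d - n) = k * (d - n) + (d - n) := by ring
        omega
    have hatoms : ∀ k, ∀ a ∈ Mk k, IsAtomS r a := by
      intro k a ha
      rw [hMk] at ha
      rcases Multiset.mem_add.mp ha with h | h
      · rw [Multiset.eq_of_mem_replicate h]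
        exact isAtom_pow h0 hr1 hn _
      · obtain ⟨j, -, hj⟩ := Multiset.mem_bind.mp h
        rw [Multiset.eq_of_mem_replicate hj]
        exact isAtom_pow h0 hr1 hn _
    have hmem : ∀ k, d + k * (d - n) ∈ atomLengthSet r (n : ℚ) := by
      intro k
      have h8 := mem_atomLengthSet_of_list r (n : ℚ) (Mk k).toList
        (fun a ha => hatoms k a (Multiset.mem_toList.mp ha))
        (by rw [Multiset.sum_toList]; exact hsumM k)
      rwa [Multiset.length_toList, hcardM k] at h8
    have hinf : (atomLengthSet r (n : ℚ)).Infinite := by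
      refine Set.infinite_of_injective_forall_mem
        (f := fun k : ℕ => d + k * (d - n)) ?_ hmem
      intro a b hab
      simp only at hab
      exact Nat.eq_of_mul_eq_mul_right (by omega) (Nat.add_left_cancel hab)
    exact hinf (H (n : ℚ) hx (Nat.cast_ne_zero.mpr (by omega)))
  · -- if `1 ≤ r`, all atom length sets are finite
    intro hr x hx hx0
    refine Set.Finite.subset (Set.finite_Iic ⌈x⌉₊) ?_
    rintro t ⟨f, hf, hsum⟩
    have h1 : ∀ i, (1 : ℚ) ≤ f i := fun i =>
      one_le_of_mem_S hr (hf i).1 (hf i).2.1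
    have htx : (t : ℚ) ≤ x := by
      calc (t : ℚ) = ∑ _i : Fin t, (1 : ℚ) := by simp
        _ ≤ ∑ i, f i := Finset.sum_le_sum fun i _ => h1 i
        _ = x := hsum
    have : (t : ℚ) ≤ (⌈x⌉₊ : ℚ) := htx.trans (Nat.le_ceil x)
    exact Set.mem_Iic.mpr (by exact_mod_cast this)
end

section
/- Let r ∈ ℚ_{>0} be such that S_r is atomic (i.e., r = 1 or n(r) > 1). Then the elasticity of S_r is accepted — that is, there exists x ∈ S_r with ρ(x) = ρ(S_r) — if and only if r ∈ ℕ or r < 1. -/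
open Finsupp
open scoped ENNReal

open Classical in
/-- The elasticity of `x` in `S_r` (as an extended nonnegative real). -/
noncomputable def elast (r x : ℚ) : ℝ≥0∞ :=
  if x = 0 then 1
  else if BddAbove (atomLengthSet r x) then
    (↑(sSup (atomLengthSet r x)) : ℝ≥0∞) / (↑(sInf (atomLengthSet r x)) : ℝ≥0∞)
  else ⊤

/-- The elasticity of the monoid `S_r`. -/
noncomputable def elastM (r : ℚ) : ℝ≥0∞ := ⨆ x ∈ S r, elast r x

open scoped ENNReal


lemma pow_mem_S (r : ℚ) (k : ℕ) : r ^ k ∈ S r :=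
  AddSubmonoid.subset_closure ⟨k, rfl⟩

lemma sum_mem_S (r : ℚ) (m : Multiset ℕ) : (m.map (r ^ ·)).sum ∈ S r := by
  induction m using Multiset.induction_on with
  | empty => simp [AddSubmonoid.zero_mem]
  | cons a s ih => simpa using (S r).add_mem (pow_mem_S r a) ih

lemma exists_multiset {r x : ℚ} (hx : x ∈ S r) :
    ∃ m : Multiset ℕ, (m.map (r ^ ·)).sum = x := by
  induction hx using AddSubmonoid.closure_induction with
  | mem x h => obtain ⟨k, rfl⟩ := h; exact ⟨{k}, by simp⟩
  | zero => exact ⟨0, by simp⟩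
  | add x y hx hy ihx ihy =>
      obtain ⟨m1, h1⟩ := ihx; obtain ⟨m2, h2⟩ := ihy
      exact ⟨m1 + m2, by simp [h1, h2]⟩

lemma S_nonneg {r x : ℚ} (h0 : 0 ≤ r) (hx : x ∈ S r) : 0 ≤ x := by
  obtain ⟨m, rfl⟩ := exists_multiset hx
  refine Multiset.sum_nonneg ?_
  intro a ha
  obtain ⟨e, _, rfl⟩ := Multiset.mem_map.mp ha
  positivity

lemma S_one_le {r x : ℚ} (h0 : 0 ≤ r) (h1 : 1 ≤ r) (hx : x ∈ S r) (hne : x ≠ 0) : 1 ≤ x := by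
  obtain ⟨m, rfl⟩ := exists_multiset hx
  rcases m.empty_or_exists_mem with rfl | ⟨e, he⟩
  · simp at hne
  · calc (1:ℚ) ≤ r ^ e := one_le_pow₀ h1
      _ ≤ (m.map (r ^ ·)).sum := Multiset.single_le_sum
          (fun b hb => by obtain ⟨e', _, rfl⟩ := Multiset.mem_map.mp hb; positivity)
          _ (Multiset.mem_map_of_mem _ he)


lemma nat_cast_msum (m : Multiset ℕ) (f : ℕ → ℕ) :
    (((m.map f).sum : ℕ) : ℚ) = (m.map fun e => ((f e : ℕ) : ℚ)).sum := by
  rw [Nat.cast_multiset_sum, Multiset.map_map]; rfl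

lemma nat_eq (r : ℚ) (n d : ℕ) (hrd : r * d = n) {i M : ℕ} (hi : i ≤ M)
    {m : Multiset ℕ} (hm : ∀ e ∈ m, e ≤ M) (hs : (m.map (r ^ ·)).sum = r ^ i) :
    n ^ i * d ^ (M - i) = (m.map fun e => n ^ e * d ^ (M - e)).sum := by
  have key : ∀ e, e ≤ M → ((n ^ e * d ^ (M - e) : ℕ) : ℚ) = r ^ e * (d : ℚ) ^ M := by
    intro e he
    have hdM : (d : ℚ) ^ M = (d:ℚ) ^ e * (d:ℚ) ^ (M - e) := by
      rw [← pow_add, Nat.add_sub_cancel' he]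
    push_cast
    rw [← hrd, hdM]; ring
  apply @Nat.cast_injective ℚ _ _
  rw [nat_cast_msum m (fun e => n ^ e * d ^ (M - e))]
  rw [Multiset.map_congr rfl (fun e he => key e (hm e he))]
  rw [Multiset.sum_map_mul_right, hs, key i hi]

lemma sum_map_ite {α : Type*} [AddCommMonoid α] (m : Multiset ℕ) (a : ℕ) (c : α) :
    (m.map fun e => if e = a then c else 0).sum = (m.count a) • c := by
  induction m using Multiset.induction_on with
  | empty => simp
  | cons b s ih =>
      simp only [Multiset.map_cons, Multiset.sum_cons, ih, Multiset.count_cons]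
      by_cases hb : a = b <;> simp [hb, eq_comm, add_smul, add_comm]

-- n divides count of 0 when i ≥ 1
lemma dvd_count_zero {n d : ℕ} (hn : 2 ≤ n) (hco : Nat.Coprime n d) {i M : ℕ} (hi : 1 ≤ i)
    {m : Multiset ℕ} (heq : n ^ i * d ^ (M - i) = (m.map fun e => n ^ e * d ^ (M - e)).sum) :
    n ∣ m.count 0 := by
  haveI : NeZero n := ⟨by omega⟩
  have h2 := congrArg (Nat.cast : ℕ → ZMod n) heq
  rw [Nat.cast_multiset_sum, Multiset.map_map] at h2
  have h3 : ∀ e ∈ m, ((Nat.cast : ℕ → ZMod n) ∘ fun e => n ^ e * d ^ (M - e)) e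
      = (fun e => if e = 0 then (d : ZMod n) ^ M else 0) e := by
    intro e _
    simp only [Function.comp_apply, Nat.cast_mul, Nat.cast_pow, ZMod.natCast_self]
    rcases Nat.eq_zero_or_pos e with rfl | he
    · simp
    · have he' : e ≠ 0 := by omega
      rw [zero_pow he', zero_mul, if_neg he']
  rw [Multiset.map_congr rfl h3, sum_map_ite] at h2
  have hlhs : ((n ^ i * d ^ (M - i) : ℕ) : ZMod n) = 0 := by
    push_cast
    rw [ZMod.natCast_self, zero_pow (by omega : i ≠ 0), zero_mul]
  rw [hlhs] at h2
  have hu : IsUnit ((d : ZMod n) ^ M) := ((ZMod.isUnit_iff_coprime d n).mpr hco.symm).pow M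
  have : ((m.count 0 : ℕ) : ZMod n) = 0 := by
    have := h2.symm
    rw [nsmul_eq_mul] at this
    exact (hu.mul_left_eq_zero).mp this
  exact (ZMod.natCast_eq_zero_iff _ _).mp this

-- d divides count of M (top exponent), when M ≥ 1 and i = 0
lemma dvd_count_top {n d : ℕ} (hd : 2 ≤ d) (hco : Nat.Coprime n d) {M : ℕ} (hM : 1 ≤ M)
    {m : Multiset ℕ} (hm : ∀ e ∈ m, e ≤ M)
    (heq : n ^ 0 * d ^ (M - 0) = (m.map fun e => n ^ e * d ^ (M - e)).sum) :
    d ∣ m.count M := by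
  haveI : NeZero d := ⟨by omega⟩
  have h2 := congrArg (Nat.cast : ℕ → ZMod d) heq
  rw [Nat.cast_multiset_sum, Multiset.map_map] at h2
  have h3 : ∀ e ∈ m, ((Nat.cast : ℕ → ZMod d) ∘ fun e => n ^ e * d ^ (M - e)) e
      = (fun e => if e = M then (n : ZMod d) ^ M else 0) e := by
    intro e he
    simp only [Function.comp_apply, Nat.cast_mul, Nat.cast_pow, ZMod.natCast_self]
    rcases eq_or_ne e M with rfl | hne
    · simp
    · have : M - e ≠ 0 := by have := hm e he; omega
      simp [zero_pow_eq, this, hne]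
  rw [Multiset.map_congr rfl h3, sum_map_ite] at h2
  have hlhs : ((n ^ 0 * d ^ (M - 0) : ℕ) : ZMod d) = 0 := by
    push_cast
    rw [ZMod.natCast_self, zero_pow (by omega : M - 0 ≠ 0)]
    ring
  rw [hlhs] at h2
  have hu : IsUnit ((n : ZMod d) ^ M) := ((ZMod.isUnit_iff_coprime n d).mpr hco).pow M
  have : ((m.count M : ℕ) : ZMod d) = 0 := by
    have := h2.symm
    rw [nsmul_eq_mul] at this
    exact (hu.mul_left_eq_zero).mp this
  exact (ZMod.natCast_eq_zero_iff _ _).mp this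

lemma no_big_rep {r : ℚ} {n d : ℕ} (h0 : 0 < r) (hn : 2 ≤ n) (hd : 2 ≤ d)
    (hrd : r * d = n) (hco : Nat.Coprime n d) :
    ∀ (N i : ℕ) (m : Multiset ℕ), i + m.sup ≤ N →
      (m.map (r ^ ·)).sum = r ^ i → 2 ≤ Multiset.card m → False := by
  intro N
  induction N with
  | zero =>
      intro i m hN hs hc
      -- i = 0, sup m = 0, so all elements are 0
      have hi : i = 0 := by omega
      have hsup : m.sup = 0 := by omega
      have hall : ∀ e ∈ m, r ^ e = 1 := by
        intro e he
        have : e = 0 := by have := Multiset.le_sup he; omega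
        simp [this]
      rw [Multiset.map_congr rfl hall] at hs
      rw [Multiset.map_const', Multiset.sum_replicate, hi, pow_zero, nsmul_eq_mul, mul_one] at hs
      have : (Multiset.card m : ℚ) = ((1:ℕ) : ℚ) := by rw [hs]; norm_num
      have hcm : Multiset.card m = 1 := by exact_mod_cast this
      omega
  | succ N ih =>
      intro i m hN hs hc
      have hmM : ∀ e ∈ m, e ≤ N + 1 := fun e he => le_trans (Multiset.le_sup he) (by omega)
      rcases Nat.eq_zero_or_pos i with rfl | hi
      · -- i = 0
        rcases Nat.eq_zero_or_pos m.sup with hsup | hsup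
        · -- all elements 0: same as base case
          have hall : ∀ e ∈ m, r ^ e = 1 := by
            intro e he
            have : e = 0 := by have := Multiset.le_sup he; omega
            simp [this]
          rw [Multiset.map_congr rfl hall] at hs
          rw [Multiset.map_const', Multiset.sum_replicate, pow_zero, nsmul_eq_mul, mul_one] at hs
          have : (Multiset.card m : ℚ) = ((1:ℕ) : ℚ) := by rw [hs]; norm_num
          have hcm : Multiset.card m = 1 := by exact_mod_cast this
          omega
        · -- top-exponent descent
          set β := m.sup with hβ
          have hmβ : ∀ e ∈ m, e ≤ β := fun e he => Multiset.le_sup he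
          have heq := nat_eq r n d hrd (Nat.zero_le β) hmβ hs
          have hdvd : d ∣ m.count β := dvd_count_top hd hco hsup hmβ heq
          have hcβ : 1 ≤ m.count β := by
            by_contra hcon
            have h0' : m.count β = 0 := by omega
            have : β ≤ β - 1 := by
              apply Multiset.sup_le.mpr
              intro e he
              have h1 := hmβ e he
              have h2 : e ≠ β := by
                intro h; rw [h] at he; exact absurd (Multiset.count_pos.mpr he) (by omega)
              omega
            omega
          obtain ⟨s, hse⟩ := hdvd
          have hs1 : 1 ≤ s := by nlinarith [hse, hcβ]
          -- new multiset
          set m' := m.filter (fun e => ¬ (e = β)) + Multiset.replicate (s * n) (β - 1) with hm'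
          -- sum of m'
          have hsplit : m.filter (fun e => e = β) + m.filter (fun e => ¬ (e = β)) = m :=
            Multiset.filter_add_not _ m
          have hfeq : m.filter (fun e => e = β) = Multiset.replicate (m.count β) β := by
            have := Multiset.filter_eq m β
            simpa [eq_comm] using this
          have hsum_m : ((m.filter (fun e => ¬ (e = β))).map (r ^ ·)).sum
              + (m.count β : ℚ) * r ^ β = 1 := by
            have := hs
            rw [← hsplit, Multiset.map_add, Multiset.sum_add, hfeq] at this
            rw [Multiset.map_replicate, Multiset.sum_replicate, nsmul_eq_mul] at this
            rw [pow_zero] at this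
            linarith [this]
          have hkey : (s * n : ℚ) * r ^ (β - 1) = (m.count β : ℚ) * r ^ β := by
            have hβsplit : r ^ β = r * r ^ (β - 1) := by
              conv_lhs => rw [show β = 1 + (β - 1) by omega]
              rw [pow_add, pow_one]
            rw [hse, hβsplit]
            push_cast
            rw [← hrd]
            ring
          have hsum' : (m'.map (r ^ ·)).sum = r ^ (0:ℕ) := by
            rw [hm', Multiset.map_add, Multiset.sum_add, Multiset.map_replicate,
              Multiset.sum_replicate, nsmul_eq_mul, pow_zero]
            push_cast
            rw [show ((s:ℚ) * n) * r ^ (β-1) = ((s*n : ℕ) : ℚ) * r ^ (β-1) by push_cast; ring] at hkey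
            push_cast at hkey
            linarith [hsum_m, hkey]
          have hcard' : 2 ≤ Multiset.card m' := by
            rw [hm']
            simp only [Multiset.card_add, Multiset.card_replicate]
            nlinarith
          have hsup' : (0:ℕ) + m'.sup ≤ N := by
            rw [zero_add]
            apply Multiset.sup_le.mpr
            intro e he
            rw [hm', Multiset.mem_add] at he
            rcases he with he | he
            · have h1 := Multiset.of_mem_filter he
              have h2 := hmβ e (Multiset.mem_of_mem_filter he)
              omega
            · have := Multiset.eq_of_mem_replicate he
              omega
          exact ih 0 m' hsup' hsum' hcard'
      · -- i ≥ 1 : bottom descent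
        have heq := nat_eq r n d hrd (show i ≤ N+1 by omega) hmM hs
        have hdvd : n ∣ m.count 0 := dvd_count_zero hn hco hi heq
        obtain ⟨t, hte⟩ := hdvd
        set m' := m.filter (fun e => ¬ (e = 0)) + Multiset.replicate (t * d) 1 with hm'
        have hsplit : m.filter (fun e => e = 0) + m.filter (fun e => ¬ (e = 0)) = m :=
          Multiset.filter_add_not _ m
        have hfeq : m.filter (fun e => e = 0) = Multiset.replicate (m.count 0) 0 := by
          have := Multiset.filter_eq m 0
          simpa [eq_comm] using this
        have hsum_m : ((m.filter (fun e => ¬ (e = 0))).map (r ^ ·)).sum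
            + (m.count 0 : ℚ) = r ^ i := by
          have := hs
          rw [← hsplit, Multiset.map_add, Multiset.sum_add, hfeq] at this
          rw [Multiset.map_replicate, Multiset.sum_replicate, nsmul_eq_mul] at this
          rw [pow_zero, mul_one] at this
          linarith [this]
        have hkey : ((t * d : ℕ) : ℚ) * r ^ (1:ℕ) = (m.count 0 : ℚ) := by
          rw [hte]
          push_cast
          rw [pow_one, ← hrd]
          ring
        have hsum' : (m'.map (r ^ ·)).sum = r ^ i := by
          rw [hm', Multiset.map_add, Multiset.sum_add, Multiset.map_replicate,
            Multiset.sum_replicate, nsmul_eq_mul, pow_one]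
          rw [pow_one] at hkey
          linarith [hsum_m, hkey]
        -- all elements of m' are ≥ 1
        have hpos : ∀ e ∈ m', 1 ≤ e := by
          intro e he
          rw [hm', Multiset.mem_add] at he
          rcases he with he | he
          · have h1 := Multiset.of_mem_filter he
            omega
          · have := Multiset.eq_of_mem_replicate he
            omega
        -- shift down
        set m'' := m'.map (fun e => e - 1) with hm''
        have hshift : r * (m''.map (r ^ ·)).sum = r * r ^ (i - 1) := by
          rw [hm'', Multiset.map_map]
          rw [← Multiset.sum_map_mul_left]
          have : ∀ e ∈ m', r * r ^ (e - 1) = r ^ e := by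
            intro e he
            conv_rhs => rw [show e = 1 + (e - 1) by have := hpos e he; omega]
            rw [pow_add, pow_one]
          rw [Multiset.map_congr rfl (fun e he => by
            simpa using this e he)]
          rw [hsum']
          conv_lhs => rw [show i = 1 + (i - 1) by omega]
          rw [pow_add, pow_one]
        have hsum'' : (m''.map (r ^ ·)).sum = r ^ (i - 1) :=
          mul_left_cancel₀ (ne_of_gt h0) hshift
        have hcard'' : 2 ≤ Multiset.card m'' := by
          rw [hm'', Multiset.card_map, hm']
          simp only [Multiset.card_add, Multiset.card_replicate]
          rcases Nat.eq_zero_or_pos t with rfl | ht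
          · -- t = 0 : count 0 = 0, filter is whole m
            have h00 : m.count 0 = 0 := by omega
            have : m.filter (fun e => ¬ (e = 0)) = m := by
              apply Multiset.filter_eq_self.mpr
              intro a ha
              intro h; rw [h] at ha
              exact absurd (Multiset.count_pos.mpr ha) (by omega)
            rw [this]; omega
          · nlinarith
        have hsup'' : (i - 1) + m''.sup ≤ N := by
          have hsub : m''.sup ≤ m.sup := by
            apply Multiset.sup_le.mpr
            intro e he
            rw [hm''] at he
            obtain ⟨e', he', rfl⟩ := Multiset.mem_map.mp he
            rw [hm', Multiset.mem_add] at he'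
            rcases he' with he' | he'
            · have := Multiset.le_sup (Multiset.mem_of_mem_filter he')
              omega
            · have := Multiset.eq_of_mem_replicate he'
              omega
          omega
        exact ih (i-1) m'' hsup'' hsum'' hcard''

lemma isAtom_pow_s6 {r : ℚ} {n d : ℕ} (h0 : 0 < r) (hn : 2 ≤ n) (hd : 2 ≤ d)
    (hrd : r * d = n) (hco : Nat.Coprime n d) (k : ℕ) : IsAtomS r (r ^ k) := by
  refine ⟨pow_mem_S r k, (pow_pos h0 k).ne', ?_⟩
  rintro ⟨y, z, hy, hz, hy0, hz0, hsum⟩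
  obtain ⟨my, hmy⟩ := exists_multiset hy
  obtain ⟨mz, hmz⟩ := exists_multiset hz
  have hmy0 : my ≠ 0 := by rintro rfl; simp at hmy; exact hy0 hmy.symm
  have hmz0 : mz ≠ 0 := by rintro rfl; simp at hmz; exact hz0 hmz.symm
  have hcard : 2 ≤ Multiset.card (my + mz) := by
    have h1 := Multiset.card_pos.mpr hmy0
    have h2 := Multiset.card_pos.mpr hmz0
    simp only [Multiset.card_add]; omega
  have hsum' : ((my + mz).map (r ^ ·)).sum = r ^ k := by
    rw [Multiset.map_add, Multiset.sum_add, hmy, hmz, ← hsum]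
  exact no_big_rep h0 hn hd hrd hco (k + (my + mz).sup) k (my + mz) le_rfl hsum' hcard

lemma list_length_mem {r x : ℚ} {l : List ℚ} (hl : ∀ a ∈ l, IsAtomS r a)
    (hs : l.sum = x) : l.length ∈ atomLengthSet r x := by
  refine ⟨fun i => l[i], fun i => hl _ (l.getElem_mem i.isLt), ?_⟩
  show ∑ i : Fin l.length, l[(i:ℕ)] = x
  rw [Fin.sum_univ_getElem, hs]

lemma zero_not_mem_atomLengthSet {r x : ℚ} (hx : x ≠ 0) : 0 ∉ atomLengthSet r x := by
  rintro ⟨f, _, hf⟩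
  simp at hf
  exact hx hf.symm

lemma length_le {r x : ℚ} (h1 : 1 ≤ r) {t : ℕ} (ht : t ∈ atomLengthSet r x) : (t : ℚ) ≤ x := by
  obtain ⟨f, hf, rfl⟩ := ht
  calc (t : ℚ) = ∑ _i : Fin t, (1:ℚ) := by simp
    _ ≤ ∑ i, f i := Finset.sum_le_sum fun i _ =>
        S_one_le (by linarith) h1 (hf i).1 (hf i).2.1

lemma bddAbove_atomLengthSet {r x : ℚ} (h1 : 1 ≤ r) : BddAbove (atomLengthSet r x) := by
  refine ⟨⌈x⌉₊, fun t ht => ?_⟩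
  have h2 := length_le h1 ht
  have h3 : (t : ℚ) ≤ (⌈x⌉₊ : ℚ) := le_trans h2 (Nat.le_ceil x)
  exact_mod_cast h3

lemma elast_zero (r : ℚ) : elast r 0 = 1 := by simp [elast]

lemma atom_eq_one {m : ℕ} {a : ℚ} (ha : IsAtomS (m : ℚ) a) : a = 1 := by
  obtain ⟨haS, ha0, hnd⟩ := ha
  obtain ⟨ms, hms⟩ := exists_multiset haS
  have hcast : a = (((ms.map fun e => m ^ e).sum : ℕ) : ℚ) := by
    rw [nat_cast_msum]
    rw [← hms]
    congr 1
    apply Multiset.map_congr rfl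
    intro e _
    push_cast
    rfl
  set N := ((ms.map fun e => m ^ e).sum : ℕ) with hN
  have hN0 : N ≠ 0 := by
    intro h
    rw [hcast, h] at ha0
    exact ha0 (by norm_num)
  rcases eq_or_ne N 1 with h1 | h1
  · rw [hcast, h1]; norm_num
  · exfalso
    apply hnd
    refine ⟨1, ((N - 1 : ℕ) : ℚ), ?_, ?_, one_ne_zero, ?_, ?_⟩
    · simpa using pow_mem_S (m : ℚ) 0
    · have : ((N - 1 : ℕ)) • (1:ℚ) ∈ S (m:ℚ) :=
        AddSubmonoid.nsmul_mem _ (by simpa using pow_mem_S (m : ℚ) 0) _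
      simpa using this
    · have : 1 ≤ N - 1 := by omega
      exact_mod_cast (by omega : N - 1 ≠ 0)
    · rw [hcast]
      push_cast [Nat.cast_sub (by omega : 1 ≤ N)]
      ring

lemma elast_le_one_of_nat (m : ℕ) (x : ℚ) : elast (m : ℚ) x ≤ 1 := by
  rcases eq_or_ne x 0 with rfl | hx
  · rw [elast_zero]
  · have hsub : (atomLengthSet (m:ℚ) x).Subsingleton := by
      rintro s ⟨f, hf, hfs⟩ t ⟨g, hg, hgs⟩
      have hfsum : (s : ℚ) = x := by
        rw [← hfs]
        rw [Finset.sum_congr rfl fun i _ => atom_eq_one (hf i)]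
        simp
      have hgsum : (t : ℚ) = x := by
        rw [← hgs]
        rw [Finset.sum_congr rfl fun i _ => atom_eq_one (hg i)]
        simp
      have : (s : ℚ) = (t : ℚ) := by rw [hfsum, hgsum]
      exact_mod_cast this
    have hbdd : BddAbove (atomLengthSet (m:ℚ) x) := hsub.finite.bddAbove
    rw [elast, if_neg hx, if_pos hbdd]
    rcases hsub.eq_empty_or_singleton with he | ⟨t, he⟩
    · rw [he]
      rw [show sSup (∅ : Set ℕ) = 0 from csSup_empty, Nat.sInf_empty]
      simp
    · rw [he, csSup_singleton, csInf_singleton]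
      exact ENNReal.div_self_le_one

lemma elastM_nat (m : ℕ) : elastM (m : ℚ) = 1 := by
  refine le_antisymm (iSup₂_le fun x _ => elast_le_one_of_nat m x) ?_
  have h := le_biSup (elast (m:ℚ)) (S (m:ℚ)).zero_mem
  rw [elast_zero] at h
  exact h

def llist (r : ℚ) (c d : ℕ) : ℕ → List ℚ := fun k =>
  ((List.range k).flatMap fun j => List.replicate c (r ^ (j + 1))) ++
    List.replicate d (r ^ (k + 1))

lemma llist_mem {r : ℚ} {c d : ℕ} (k : ℕ) :
    ∀ a ∈ llist r c d k, ∃ j : ℕ, a = r ^ (j + 1) := by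
  intro a ha
  rw [llist, List.mem_append] at ha
  rcases ha with ha | ha
  · obtain ⟨j, _, hj⟩ := List.mem_flatMap.mp ha
    exact ⟨j, (List.mem_replicate.mp hj).2⟩
  · exact ⟨k, (List.mem_replicate.mp ha).2⟩

lemma llist_length {r : ℚ} (c d : ℕ) (k : ℕ) :
    (llist r c d k).length = c * k + d := by
  induction k with
  | zero => simp [llist]
  | succ k ih =>
      rw [llist, List.range_succ] at *
      simp only [List.flatMap_append, List.length_append] at *
      simp only [List.flatMap_cons, List.flatMap_nil, List.length_append, List.length_replicate,
        List.append_nil] at *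
      rw [Nat.mul_succ]
      omega

lemma llist_sum {r : ℚ} {n d : ℕ} (hrd : r * d = n) (hnd : n ≤ d) (k : ℕ) :
    (llist r (d - n) d k).sum = (n : ℚ) := by
  induction k with
  | zero =>
      rw [llist]
      simp only [List.range_zero, List.flatMap_nil, List.nil_append]
      rw [List.sum_replicate, nsmul_eq_mul, pow_one, mul_comm, hrd]
  | succ k ih =>
      rw [llist, List.range_succ, List.flatMap_append, List.flatMap_cons, List.flatMap_nil,
        List.append_nil] at *
      rw [List.sum_append] at ih ⊢
      rw [List.sum_append]
      rw [List.sum_replicate] at ih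
      rw [List.sum_replicate, List.sum_replicate]
      rw [← ih]
      have hc : ((d - n : ℕ) : ℚ) = (d : ℚ) - n := by
        push_cast [Nat.cast_sub hnd]; ring
      have hkey : (d : ℚ) * r ^ (k + 1 + 1) = (n : ℚ) * r ^ (k + 1) := by
        rw [show r ^ (k+1+1) = r * r ^ (k+1) by ring, ← hrd]; ring
      simp only [nsmul_eq_mul, hc]
      nlinarith [hkey]

lemma lt1_case {r : ℚ} {n d : ℕ} (h0 : 0 < r) (hn : 2 ≤ n) (hd : 2 ≤ d)
    (hrd : r * d = n) (hco : Nat.Coprime n d) (hlt : n < d) :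
    ∃ x ∈ S r, elast r x = elastM r := by
  have hmem : ((n : ℕ) : ℚ) ∈ S r := by
    have := AddSubmonoid.nsmul_mem (S r) (pow_mem_S r 0) n
    simpa using this
  have hmemk : ∀ k : ℕ, (d - n) * k + d ∈ atomLengthSet r (n : ℚ) := by
    intro k
    have hatoms : ∀ a ∈ llist r (d - n) d k, IsAtomS r a := by
      intro a ha
      obtain ⟨j, rfl⟩ := llist_mem k a ha
      exact isAtom_pow_s6 h0 hn hd hrd hco (j + 1)
    have hlst := list_length_mem hatoms (llist_sum hrd (le_of_lt hlt) k)
    rwa [llist_length] at hlst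
  have hNB : ¬ BddAbove (atomLengthSet r (n : ℚ)) := by
    rintro ⟨B, hB⟩
    have h1 := hB (hmemk (B + 1))
    have h2 : 1 * (B + 1) ≤ (d - n) * (B + 1) := Nat.mul_le_mul_right _ (by omega)
    omega
  have hne : ((n : ℕ) : ℚ) ≠ 0 := Nat.cast_ne_zero.mpr (by omega)
  have helast : elast r (n : ℚ) = ⊤ := by rw [elast, if_neg hne, if_neg hNB]
  have htop : elastM r = ⊤ :=
    le_antisymm le_top (helast ▸ le_biSup (elast r) hmem)
  exact ⟨(n : ℚ), hmem, by rw [helast, htop]⟩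

lemma bern (d k : ℕ) (hk : 1 ≤ k) : d ^ k + k * d ^ (k - 1) ≤ (d + 1) ^ k := by
  induction k with
  | zero => omega
  | succ k ih =>
      rcases Nat.eq_zero_or_pos k with rfl | hk'
      · simp
      · have h := ih hk'
        have e1 : d ^ (k - 1) * d = d ^ k := by
          rw [← pow_succ]; congr 1; omega
        have e2 : d ^ k * d = d ^ (k + 1) := (pow_succ d k).symm
        have hexp : (d ^ k + k * d ^ (k - 1)) * (d + 1)
            = d ^ (k + 1) + (k + 1) * d ^ k + k * d ^ (k - 1) := by
          have e3 : (d ^ k + k * d ^ (k - 1)) * (d + 1)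
              = d ^ k * d + k * (d ^ (k - 1) * d) + d ^ k + k * d ^ (k - 1) := by ring
          rw [e3, e1, e2]; ring
        have hmul : (d ^ k + k * d ^ (k - 1)) * (d + 1) ≤ (d + 1) ^ k * (d + 1) :=
          Nat.mul_le_mul_right _ h
        rw [← pow_succ, hexp] at hmul
        simp only [Nat.add_sub_cancel]
        exact le_trans (Nat.le_add_right _ _) hmul

lemma key_ineq {n d N : ℕ} (hd : 1 ≤ d) (hnd : d + 1 ≤ n) :
    N * d ^ (N * d) ≤ n ^ (N * d) := by
  rcases Nat.eq_zero_or_pos N with rfl | hN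
  · simp
  · set k := N * d with hk
    have hk1 : 1 ≤ k := Nat.mul_pos hN hd
    have h1 : (d + 1) ^ k ≤ n ^ k := Nat.pow_le_pow_left hnd k
    have h2 := bern d k hk1
    have e1 : d ^ (k - 1) * d = d ^ k := by rw [← pow_succ]; congr 1; omega
    have h3 : k * d ^ (k - 1) = N * d ^ k := by
      rw [hk]
      calc N * d * d ^ (k - 1) = N * (d ^ (k - 1) * d) := by ring
        _ = N * d ^ k := by rw [e1]
    calc N * d ^ k ≤ d ^ k + N * d ^ k := Nat.le_add_left _ _
      _ = d ^ k + k * d ^ (k - 1) := by rw [h3]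
      _ ≤ (d + 1) ^ k := h2
      _ ≤ n ^ k := h1

lemma elast_ne_top {r : ℚ} (h1 : 1 ≤ r) (x : ℚ) : elast r x ≠ ⊤ := by
  rcases eq_or_ne x 0 with rfl | hx
  · rw [elast_zero]; exact ENNReal.one_ne_top
  · rw [elast, if_neg hx, if_pos (bddAbove_atomLengthSet h1)]
    intro htop
    rcases ENNReal.div_eq_top.mp htop with ⟨ha, hb⟩ | ⟨ha, _⟩
    · have hInf : sInf (atomLengthSet r x) = 0 := by exact_mod_cast hb
      rcases Set.eq_empty_or_nonempty (atomLengthSet r x) with he | hne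
      · rw [he] at ha
        have hss : sSup (∅ : Set ℕ) = 0 := csSup_empty
        rw [hss] at ha
        simp at ha
      · have hmm := Nat.sInf_mem hne
        rw [hInf] at hmm
        exact zero_not_mem_atomLengthSet hx hmm
    · exact ENNReal.natCast_ne_top _ ha

lemma elastM_top {r : ℚ} {n d : ℕ} (h0 : 0 < r) (h1 : 1 < r) (hn : 2 ≤ n) (hd : 2 ≤ d)
    (hdn : d < n) (hrd : r * d = n) (hco : Nat.Coprime n d) : elastM r = ⊤ := by
  by_contra h
  obtain ⟨N, hN⟩ := ENNReal.exists_nat_gt h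
  set k := N * d with hk
  set x := ((n ^ k : ℕ) : ℚ) with hxdef
  have hx0 : x ≠ 0 := Nat.cast_ne_zero.mpr (by positivity)
  have hxS : x ∈ S r := by
    have := AddSubmonoid.nsmul_mem (S r) (pow_mem_S r 0) (n ^ k)
    rw [hxdef]
    push_cast
    simpa using this
  have hatom1 : IsAtomS r (1 : ℚ) := by
    have := isAtom_pow_s6 h0 hn hd hrd hco 0
    rwa [pow_zero] at this
  have hmem1 : n ^ k ∈ atomLengthSet r x := by
    have hl := list_length_mem (x := x) (l := List.replicate (n ^ k) (1 : ℚ))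
      (fun a ha => by rw [(List.mem_replicate.mp ha).2]; exact hatom1) ?_
    · rwa [List.length_replicate] at hl
    · rw [List.sum_replicate, nsmul_eq_mul, mul_one, hxdef]
  have hmem2 : d ^ k ∈ atomLengthSet r x := by
    have hl := list_length_mem (x := x) (l := List.replicate (d ^ k) (r ^ k))
      (fun a ha => by rw [(List.mem_replicate.mp ha).2]; exact isAtom_pow_s6 h0 hn hd hrd hco k) ?_
    · rwa [List.length_replicate] at hl
    · rw [List.sum_replicate, nsmul_eq_mul, hxdef]
      push_cast
      rw [← mul_pow, mul_comm, hrd]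
  have hBdd := bddAbove_atomLengthSet (r := r) (x := x) h1.le
  have hSup : n ^ k ≤ sSup (atomLengthSet r x) := le_csSup hBdd hmem1
  have hInf : sInf (atomLengthSet r x) ≤ d ^ k := Nat.sInf_le hmem2
  have hInf0 : sInf (atomLengthSet r x) ≠ 0 := by
    intro hz
    have hmm := Nat.sInf_mem (⟨_, hmem2⟩ : (atomLengthSet r x).Nonempty)
    rw [hz] at hmm
    exact zero_not_mem_atomLengthSet hx0 hmm
  have hNle : (N : ℝ≥0∞) ≤ elast r x := by
    rw [elast, if_neg hx0, if_pos hBdd]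
    rw [ENNReal.le_div_iff_mul_le (Or.inl (by exact_mod_cast hInf0))
      (Or.inl (ENNReal.natCast_ne_top _))]
    calc (N : ℝ≥0∞) * (sInf (atomLengthSet r x) : ℕ)
        ≤ (N : ℝ≥0∞) * ((d ^ k : ℕ) : ℝ≥0∞) := mul_le_mul_right (by exact_mod_cast hInf) _
      _ = ((N * d ^ k : ℕ) : ℝ≥0∞) := by push_cast; ring
      _ ≤ ((n ^ k : ℕ) : ℝ≥0∞) := by exact_mod_cast key_ineq (by omega) (by omega)
      _ ≤ (sSup (atomLengthSet r x) : ℕ) := by exact_mod_cast hSup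
  have hle : (N : ℝ≥0∞) ≤ elastM r := le_trans hNle (le_biSup (elast r) hxS)
  exact absurd hle (not_le.mpr hN)

theorem stmt6 (r : ℚ) (h0 : 0 < r) (hat : r = 1 ∨ 1 < r.num) :
    (∃ x ∈ S r, elast r x = elastM r) ↔ ((∃ m : ℕ, r = m) ∨ r < 1) := by
  have hdpos : 0 < r.den := r.pos
  have hnumpos : 0 < r.num := Rat.num_pos.mpr h0
  set n := r.num.natAbs with hn
  set d := r.den with hd
  have hcastnum : ((n : ℕ) : ℤ) = r.num := Int.natAbs_of_nonneg (le_of_lt hnumpos)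
  have hrd : r * d = n := by
    have h1 := Rat.mul_den_eq_num r
    rw [hd, h1, ← hcastnum]
    push_cast
    rfl
  have hco : Nat.Coprime n d := r.reduced
  constructor
  · intro hex
    by_contra hR
    push_neg at hR
    obtain ⟨hnotnat, hge1⟩ := hR
    have hr1 : r ≠ 1 := by
      have := hnotnat 1
      simpa using this
    have hnum : 1 < r.num := hat.resolve_left hr1
    have h1 : 1 < r := lt_of_le_of_ne hge1 (Ne.symm hr1)
    have hd2 : 2 ≤ d := by
      by_contra hcon
      have hd1 : d = 1 := by omega
      apply hnotnat n
      have := Rat.num_div_den r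
      rw [← this, ← hd, hd1, ← hcastnum]
      push_cast
      simp
    have hdn : d < n := by
      have hq : (d : ℚ) < (n : ℚ) := by
        rw [← hrd]
        have hdq : (0:ℚ) < (d:ℚ) := by exact_mod_cast hdpos
        nlinarith
      exact_mod_cast hq
    have hn2 : 2 ≤ n := by omega
    obtain ⟨x, hxS, hxe⟩ := hex
    have htop := elastM_top h0 h1 hn2 hd2 hdn hrd hco
    exact elast_ne_top hge1 x (htop ▸ hxe)
  · intro hR
    rcases hR with ⟨m, rfl⟩ | hlt
    · exact ⟨0, (S _).zero_mem, by rw [elast_zero, elastM_nat]⟩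
    · have hr1 : r ≠ 1 := by
        intro h
        rw [h] at hlt
        exact lt_irrefl _ hlt
      have hnum : 1 < r.num := hat.resolve_left hr1
      have hn2 : 2 ≤ n := by omega
      have hnd : n < d := by
        have hq : (n : ℚ) < (d : ℚ) := by
          rw [← hrd]
          have hdq : (0:ℚ) < (d:ℚ) := by exact_mod_cast hdpos
          nlinarith
        exact_mod_cast hq
      have hd2 : 2 ≤ d := by omega
      exact lt1_case h0 hn2 hd2 hrd hco hnd
end

section
/- Let r ∈ ℚ with 0 < r < 1 and n(r) > 1 (so S_r is atomic). Then the set of elasticities R(S_r) = { ρ(x) : x ∈ S_r } equals {1, ∞}; that is, every nonzero x ∈ S_r either has a unique length (ρ(x) = 1) or an unbounded set of lengths (ρ(x) = ∞). -/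
open Finsupp
open scoped ENNReal

-- ===== auxiliary development =====

namespace Aux

noncomputable def L (r : ℚ) (α : ℕ →₀ ℕ) : ℚ := α.sum fun i c => (c : ℚ) * r ^ i

lemma isFact_iff (r x : ℚ) (α : ℕ →₀ ℕ) : IsFactorization r x α ↔ L r α = x := Iff.rfl

lemma L_add (r : ℚ) (α β : ℕ →₀ ℕ) : L r (α + β) = L r α + L r β := by
  unfold L
  apply Finsupp.sum_add_index' (by simp) (by intro i c d; push_cast; ring)

lemma L_single (r : ℚ) (i c : ℕ) : L r (single i c) = (c : ℚ) * r ^ i := by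
  unfold L
  apply Finsupp.sum_single_index (by simp)

lemma flen_add (α β : ℕ →₀ ℕ) : flen (α + β) = flen α + flen β := by
  unfold flen
  apply Finsupp.sum_add_index' (by simp) (by intro i c d; rfl)

lemma flen_single (i c : ℕ) : flen (single i c) = c := by
  unfold flen
  apply Finsupp.sum_single_index rfl

lemma mem_S_iff (r x : ℚ) : x ∈ S r ↔ ∃ α, IsFactorization r x α := by
  constructor
  · intro hx
    induction hx using AddSubmonoid.closure_induction with
    | mem y hy => obtain ⟨n, rfl⟩ := hy; exact ⟨single n 1, by simp [IsFactorization, isFact_iff, L_single]⟩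
    | zero => exact ⟨0, by simp [IsFactorization]⟩
    | add y z _ _ hy hz =>
        obtain ⟨a, ha⟩ := hy; obtain ⟨b, hb⟩ := hz
        exact ⟨a + b, by rw [isFact_iff, L_add, ← ha, ← hb]; rfl⟩
  · rintro ⟨α, rfl⟩
    classical
    show (Finset.sum α.support fun i => (α i : ℚ) * r ^ i) ∈ S r
    refine AddSubmonoid.sum_mem (S r) fun i _ => ?_
    have h1 : r ^ i ∈ S r :=
      AddSubmonoid.subset_closure (show r ^ i ∈ {x : ℚ | ∃ n : ℕ, x = r ^ n} from ⟨i, rfl⟩)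
    have h2 : ((α i) • (r ^ i) : ℚ) = (α i : ℚ) * r ^ i := nsmul_eq_mul _ _
    rw [← h2]
    exact (S r).nsmul_mem h1 (α i)

lemma fact_nonneg {r x : ℚ} (h0 : 0 < r) {α : ℕ →₀ ℕ} (h : IsFactorization r x α) : 0 ≤ x := by
  rw [isFact_iff] at h
  subst h
  apply Finset.sum_nonneg
  intro i _
  positivity

lemma term_le {r x : ℚ} (h0 : 0 < r) {α : ℕ →₀ ℕ} (h : IsFactorization r x α) (j : ℕ) :
    (α j : ℚ) * r ^ j ≤ x := by
  rw [isFact_iff] at h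
  subst h
  by_cases hj : j ∈ α.support
  · exact Finset.single_le_sum (f := fun i => (α i : ℚ) * r ^ i) (fun i _ => by positivity) hj
  · simp only [Finsupp.notMem_support_iff] at hj
    rw [hj]
    simp only [Nat.cast_zero, zero_mul]
    apply Finset.sum_nonneg; intro i _; positivity

lemma term_pair_le {r x : ℚ} (h0 : 0 < r) {α : ℕ →₀ ℕ} (h : IsFactorization r x α) {j k : ℕ}
    (hjk : j ≠ k) : (α j : ℚ) * r ^ j + (α k : ℚ) * r ^ k ≤ x := by
  classical
  rw [isFact_iff] at h
  subst h
  unfold L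
  rw [Finsupp.sum_of_support_subset α (Finset.subset_union_left (s₂ := {j, k})) _ (by simp)]
  have := Finset.sum_pair (f := fun i => (α i : ℚ) * r ^ i) hjk
  rw [← this]
  apply Finset.sum_le_sum_of_subset_of_nonneg
  · exact Finset.subset_union_right
  · intro i _ _; positivity


lemma num_eq (r : ℚ) : (r.num : ℚ) = r * r.den := by exact (Rat.mul_den_eq_num r).symm

lemma den_rel (r : ℚ) (i : ℕ) : (r.den : ℚ) * r ^ (i + 1) = (r.num : ℚ) * r ^ i := by
  rw [num_eq]; ring

lemma num_lt_den {r : ℚ} (h1 : r < 1) : r.num < (r.den : ℤ) := by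
  have h : (r.num : ℚ) < (r.den : ℚ) := by
    calc (r.num : ℚ) = r * r.den := num_eq r
    _ < 1 * r.den := mul_lt_mul_of_pos_right h1 (by exact_mod_cast r.pos)
    _ = r.den := one_mul _
  exact_mod_cast h

lemma num_pos {r : ℚ} (hn : 1 < r.num) : (0:ℤ) < r.num := lt_trans one_pos hn

lemma cast_sum_eq {r x : ℚ} {α : ℕ →₀ ℕ} (h : IsFactorization r x α) {M : ℕ}
    (hM : ∀ j ∈ α.support, j ≤ M) :
    x * (r.den : ℚ) ^ M =
      ((∑ j ∈ Finset.range (M + 1), (α j : ℤ) * r.num ^ j * (r.den : ℤ) ^ (M - j) : ℤ) : ℚ) := by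
  rw [isFact_iff] at h
  subst h
  unfold L
  rw [Finsupp.sum_of_support_subset α
    (fun j hj => Finset.mem_range.mpr (Nat.lt_succ_of_le (hM j hj))) _ (by simp)]
  push_cast
  rw [Finset.sum_mul]
  apply Finset.sum_congr rfl
  intro j hj
  have hjM : j ≤ M := Nat.lt_succ_iff.mp (Finset.mem_range.mp hj)
  have hd : ((r.den : ℚ)) ^ M = (r.den : ℚ) ^ j * (r.den : ℚ) ^ (M - j) := by
    rw [← pow_add, Nat.add_sub_cancel' hjM]
  rw [hd]
  have : (r.num : ℚ) ^ j = r ^ j * (r.den : ℚ) ^ j := by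
    rw [num_eq, mul_pow]
  rw [this]
  ring

/-- Key arithmetic lemma: if two factorizations of the same `x` agree below `i`,
then their coefficients at `i` are congruent mod the numerator. -/
lemma num_dvd_sub {r x : ℚ} (hn : 1 < r.num) {α β : ℕ →₀ ℕ}
    (hα : IsFactorization r x α) (hβ : IsFactorization r x β) (i : ℕ)
    (hlt : ∀ j < i, α j = β j) : r.num ∣ ((α i : ℤ) - β i) := by
  classical
  set n : ℤ := r.num with hnn
  set d : ℤ := (r.den : ℤ) with hdd
  set M : ℕ := i + (α.support ∪ β.support).sup id with hM
  have hMα : ∀ j ∈ α.support, j ≤ M := fun j hj =>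
    le_trans (Finset.le_sup (f := id) (Finset.mem_union_left _ hj)) (Nat.le_add_left _ _)
  have hMβ : ∀ j ∈ β.support, j ≤ M := fun j hj =>
    le_trans (Finset.le_sup (f := id) (Finset.mem_union_right _ hj)) (Nat.le_add_left _ _)
  have hiM : i ≤ M := Nat.le_add_right _ _
  have h1 := cast_sum_eq hα hMα
  have h2 := cast_sum_eq hβ hMβ
  have hsum : (∑ j ∈ Finset.range (M + 1), (α j : ℤ) * n ^ j * d ^ (M - j)) =
      ∑ j ∈ Finset.range (M + 1), (β j : ℤ) * n ^ j * d ^ (M - j) := by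
    have := h1.symm.trans h2
    rw [hnn, hdd]
    exact_mod_cast this
  set D : ℕ → ℤ := fun j => (α j : ℤ) * n ^ j * d ^ (M - j) - (β j : ℤ) * n ^ j * d ^ (M - j)
    with hD
  have hDsum : ∑ j ∈ Finset.range (M + 1), D j = 0 := by
    rw [Finset.sum_sub_distrib, hsum, sub_self]
  have hmem : i ∈ Finset.range (M + 1) := Finset.mem_range.mpr (Nat.lt_succ_of_le hiM)
  have herase : n ^ (i + 1) ∣ ∑ j ∈ (Finset.range (M + 1)).erase i, D j := by
    apply Finset.dvd_sum
    intro j hj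
    obtain ⟨hji, hjr⟩ := Finset.mem_erase.mp hj
    rcases lt_or_gt_of_ne hji with hlt' | hgt
    · have : α j = β j := hlt j hlt'
      simp [hD, this]
    · have hDj : D j = n ^ j * (((α j : ℤ) - β j) * d ^ (M - j)) := by rw [hD]; ring
      rw [hDj]
      exact (pow_dvd_pow n hgt).mul_right _
  have hDi : n ^ (i + 1) ∣ D i := by
    have := Finset.sum_erase_add (Finset.range (M + 1)) D hmem
    have hDi' : D i = -(∑ j ∈ (Finset.range (M + 1)).erase i, D j) := by
      rw [← this] at hDsum; linarith
    rw [hDi']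
    exact dvd_neg.mpr herase
  have hni : D i = n ^ i * (((α i : ℤ) - β i) * d ^ (M - i)) := by rw [hD]; ring
  rw [hni, pow_succ] at hDi
  have hn0 : n ^ i ≠ 0 := pow_ne_zero _ (by omega)
  have hdvd : n ∣ ((α i : ℤ) - β i) * d ^ (M - i) :=
    (mul_dvd_mul_iff_left hn0).mp hDi
  have hcop : IsCoprime n (d ^ (M - i)) := by
    apply IsCoprime.pow_right
    rw [Int.isCoprime_iff_gcd_eq_one]
    simpa [Int.gcd, hnn, hdd] using r.reduced
  exact hcop.dvd_of_dvd_mul_right hdvd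


lemma flen_eq_zero {α : ℕ →₀ ℕ} (h : flen α = 0) : α = 0 := by
  classical
  unfold flen Finsupp.sum at h
  rw [Finset.sum_eq_zero_iff] at h
  ext i
  by_cases hi : i ∈ α.support
  · exact h i hi
  · simpa using Finsupp.notMem_support_iff.mp hi

lemma flen_eq_one {α : ℕ →₀ ℕ} (h : flen α = 1) : ∃ i, α = single i 1 := by
  have hcard : α.toMultiset.card = 1 := by
    rw [Finsupp.card_toMultiset]; exact h
  obtain ⟨i, hi⟩ := Multiset.card_eq_one.mp hcard
  refine ⟨i, ?_⟩
  have := congrArg Multiset.toFinsupp hi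
  rwa [Finsupp.toMultiset_toFinsupp, Multiset.toFinsupp_singleton] at this

lemma single_fact (r : ℚ) (k : ℕ) : IsFactorization r (r ^ k) (single k 1) := by
  rw [isFact_iff, L_single]; simp

lemma fact_pos {r x : ℚ} (h0 : 0 < r) {α : ℕ →₀ ℕ} (h : IsFactorization r x α) (hα : α ≠ 0) :
    0 < x := by
  obtain ⟨j, hj⟩ := Finsupp.ne_iff.mp hα
  simp only [Finsupp.coe_zero, Pi.zero_apply] at hj
  have h1 : (α j : ℚ) * r ^ j ≤ x := term_le h0 h j
  have h2 : (0:ℚ) < (α j : ℚ) * r ^ j := by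
    have : 0 < α j := Nat.pos_of_ne_zero hj
    positivity
  linarith

lemma fact_pow_unique {r : ℚ} (h0 : 0 < r) (h1 : r < 1) (hn : 1 < r.num) {k : ℕ} {α : ℕ →₀ ℕ}
    (h : IsFactorization r (r ^ k) α) : α = single k 1 := by
  classical
  by_contra hne
  have hβ : IsFactorization r (r ^ k) (single k 1) := single_fact r k
  have hex : ∃ j, α j ≠ (single k 1 : ℕ →₀ ℕ) j := by
    by_contra hc
    push_neg at hc
    exact hne (Finsupp.ext hc)
  obtain ⟨i, hdiff, hlt⟩ : ∃ i, α i ≠ (single k 1 : ℕ →₀ ℕ) i ∧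
      ∀ j < i, α j = (single k 1 : ℕ →₀ ℕ) j :=
    ⟨Nat.find hex, Nat.find_spec hex, fun j hj => by
      by_contra hc; exact Nat.find_min hex hj hc⟩
  have hdvd : r.num ∣ ((α i : ℤ) - ((single k 1 : ℕ →₀ ℕ) i : ℤ)) := num_dvd_sub hn h hβ i hlt
  have hrpos : (0:ℚ) < r ^ k := by positivity
  rcases lt_trichotomy i k with hik | hik | hik
  · -- i < k : single is 0 at i, so num ∣ α i and α i ≠ 0, hence α i ≥ 2
    have hsk : (single k 1 : ℕ →₀ ℕ) i = 0 := Finsupp.single_eq_of_ne (by omega)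
    rw [hsk] at hdiff hdvd
    simp only [Nat.cast_zero, sub_zero] at hdvd
    have hαi : 2 ≤ (α i : ℤ) := by
      have h0' : (α i : ℤ) ≠ 0 := by exact_mod_cast hdiff
      have := Int.le_of_dvd (by omega) hdvd
      omega
    have h2 : (2:ℚ) * r ^ i ≤ (α i : ℚ) * r ^ i := by
      apply mul_le_mul_of_nonneg_right _ (by positivity)
      exact_mod_cast hαi
    have h3 : (α i : ℚ) * r ^ i ≤ r ^ k := term_le h0 h i
    have h4 : r ^ k ≤ r ^ i :=
      pow_le_pow_of_le_one h0.le h1.le (by omega)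
    have h5 : (0:ℚ) < r ^ i := by positivity
    linarith
  · -- i = k : α k ≠ 1, num ∣ α k - 1
    subst hik
    rw [Finsupp.single_eq_same] at hdiff hdvd
    rcases Nat.lt_or_ge (α i) 2 with hc | hc
    · rcases (by omega : α i = 0 ∨ α i = 1) with h' | h'
      · -- α i = 0 : num ∣ -1
        rw [h'] at hdvd
        simp only [Nat.cast_zero, Nat.cast_one, zero_sub] at hdvd
        have := Int.le_of_dvd one_pos (dvd_neg.mp hdvd)
        omega
      · exact hdiff h'
    · -- α i ≥ 2
      have h2 : (2:ℚ) * r ^ i ≤ (α i : ℚ) * r ^ i := by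
        apply mul_le_mul_of_nonneg_right _ (by positivity)
        exact_mod_cast hc
      have h3 : (α i : ℚ) * r ^ i ≤ r ^ i := term_le h0 h i
      have h5 : (0:ℚ) < r ^ i := by positivity
      linarith
  · -- i > k : α k = 1 and α i ≥ 1
    have hαk : α k = 1 := by
      have := hlt k hik
      rwa [Finsupp.single_eq_same] at this
    have hsk : (single k 1 : ℕ →₀ ℕ) i = 0 := Finsupp.single_eq_of_ne (by omega)
    rw [hsk] at hdiff
    have hαi : 1 ≤ α i := Nat.pos_of_ne_zero hdiff
    have hpair := term_pair_le h0 h (show k ≠ i by omega)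
    rw [hαk] at hpair
    have h2 : (1:ℚ) * r ^ i ≤ (α i : ℚ) * r ^ i := by
      apply mul_le_mul_of_nonneg_right _ (by positivity)
      exact_mod_cast hαi
    have h5 : (0:ℚ) < r ^ i := by positivity
    simp only [Nat.cast_one, one_mul] at hpair
    linarith


lemma exists_decomp {α : ℕ →₀ ℕ} {i c : ℕ} (h : c ≤ α i) :
    ∃ γ : ℕ →₀ ℕ, α = γ + single i c := by
  classical
  refine ⟨α.update i (α i - c), ?_⟩
  ext j
  by_cases hj : j = i
  · subst hj
    simp [Finsupp.add_apply, Finsupp.single_eq_same]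
    omega
  · simp [Finsupp.add_apply, Finsupp.single_eq_of_ne' (fun h' => hj h'.symm),
      Function.update_of_ne hj]

lemma isAtom_iff {r : ℚ} (h0 : 0 < r) (h1 : r < 1) (hn : 1 < r.num) (a : ℚ) :
    IsAtomS r a ↔ ∃ i, a = r ^ i := by
  constructor
  · rintro ⟨hmem, hne, hsplit⟩
    obtain ⟨α, hα⟩ := (mem_S_iff r a).mp hmem
    have hα0 : α ≠ 0 := by
      rintro rfl
      exact hne (by simpa [IsFactorization] using hα.symm)
    have hflen : flen α ≠ 0 := fun h => hα0 (flen_eq_zero h)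
    rcases Nat.lt_or_ge (flen α) 2 with hf | hf
    · have h1' : flen α = 1 := by omega
      obtain ⟨i, rfl⟩ := flen_eq_one h1'
      refine ⟨i, ?_⟩
      rw [isFact_iff, L_single] at hα
      simpa using hα.symm
    · -- split off one atom: contradiction
      exfalso
      obtain ⟨j, hj⟩ := Finsupp.support_nonempty_iff.mpr hα0
      have hj1 : 1 ≤ α j := Nat.one_le_iff_ne_zero.mpr (Finsupp.mem_support_iff.mp hj)
      obtain ⟨γ, hγ⟩ := exists_decomp hj1
      have hγ0 : γ ≠ 0 := by
        rintro rfl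
        rw [hγ] at hα
        have : flen (0 + single j 1 : ℕ →₀ ℕ) = 1 := by rw [zero_add, flen_single]
        rw [hγ] at hf
        omega
      apply hsplit
      refine ⟨L r γ, r ^ j, (mem_S_iff r _).mpr ⟨γ, rfl⟩,
        (mem_S_iff r _).mpr ⟨single j 1, single_fact r j⟩, ?_, ?_, ?_⟩
      · exact (fact_pos h0 (rfl : IsFactorization r (L r γ) γ) hγ0).ne'
      · positivity
      · rw [← hα, hγ]
        show L r (γ + single j 1) = L r γ + r ^ j
        rw [L_add, L_single]
        push_cast
        ring
  · rintro ⟨i, rfl⟩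
    refine ⟨(mem_S_iff r _).mpr ⟨single i 1, single_fact r i⟩, by positivity, ?_⟩
    rintro ⟨y, z, hy, hz, hy0, hz0, heq⟩
    obtain ⟨a, ha⟩ := (mem_S_iff r y).mp hy
    obtain ⟨b, hb⟩ := (mem_S_iff r z).mp hz
    rw [isFact_iff] at ha hb
    have hab : IsFactorization r (r ^ i) (a + b) := by
      rw [isFact_iff, L_add, ha, hb]
      exact heq.symm
    have := fact_pow_unique h0 h1 hn hab
    have hflen : flen a + flen b = 1 := by
      rw [← flen_add, this, flen_single]
    have ha0 : flen a ≠ 0 := fun h => hy0 (by rw [flen_eq_zero h] at ha; simpa [L] using ha.symm)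
    have hb0 : flen b ≠ 0 := fun h => hz0 (by rw [flen_eq_zero h] at hb; simpa [L] using hb.symm)
    omega

lemma multiset_sum (r : ℚ) (α : ℕ →₀ ℕ) :
    (α.toMultiset.map fun i => r ^ i).sum = L r α := by
  classical
  induction α using Finsupp.induction with
  | zero => simp [L]
  | single_add a b f _ _ ih =>
      rw [Finsupp.toMultiset_add, Multiset.map_add, Multiset.sum_add, ih, L_add, L_single,
        Finsupp.toMultiset_single, Multiset.map_nsmul, Multiset.sum_nsmul]
      simp only [Multiset.map_singleton, Multiset.sum_singleton, nsmul_eq_mul]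

lemma atomLengthSet_eq {r : ℚ} (h0 : 0 < r) (h1 : r < 1) (hn : 1 < r.num) (x : ℚ) :
    atomLengthSet r x = lengthSet r x := by
  classical
  ext t
  constructor
  · rintro ⟨f, hf, hsum⟩
    have hg : ∀ i, ∃ k : ℕ, f i = r ^ k := fun i => (isAtom_iff h0 h1 hn (f i)).mp (hf i)
    choose g hg using hg
    refine ⟨∑ i, single (g i) 1, ?_, ?_⟩
    · rw [isFact_iff]
      have : L r (∑ i, single (g i) 1) = ∑ i, L r (single (g i) 1) := by
        induction (Finset.univ : Finset (Fin t)) using Finset.induction with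
        | empty => simp [L]
        | insert _ _ hns ih => rw [Finset.sum_insert hns, Finset.sum_insert hns, L_add, ih]
      rw [this]
      rw [← hsum]
      apply Finset.sum_congr rfl
      intro i _
      rw [L_single, hg i]
      simp
    · have : flen (∑ i, single (g i) 1) = ∑ i : Fin t, flen (single (g i) 1) := by
        induction (Finset.univ : Finset (Fin t)) using Finset.induction with
        | empty => simp [flen]
        | insert _ _ hns ih => rw [Finset.sum_insert hns, Finset.sum_insert hns, flen_add, ih]
      rw [this]
      simp [flen_single]
  · rintro ⟨α, hα, rfl⟩
    set s : Multiset ℚ := α.toMultiset.map fun i => r ^ i with hs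
    have hcard : s.card = flen α := by
      rw [hs, Multiset.card_map, Finsupp.card_toMultiset]; rfl
    have hsum : s.sum = x := by rw [hs, multiset_sum]; exact hα
    have hl : s.toList.length = flen α := by simp [hcard]
    refine ⟨fun i => s.toList.get (Fin.cast hl.symm i), fun i => ?_, ?_⟩
    · have hmem : s.toList.get (Fin.cast hl.symm i) ∈ s := by
        rw [← Multiset.mem_toList]; exact List.get_mem _ _
      obtain ⟨k, _, hk⟩ := Multiset.mem_map.mp hmem
      exact (isAtom_iff h0 h1 hn _).mpr ⟨k, hk.symm⟩
    · rw [← hsum, ← Multiset.sum_toList, ← Fin.sum_univ_getElem]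
      exact (Fintype.sum_equiv (finCongr hl.symm) _ _ (fun i => rfl))

lemma toNat_cast {r : ℚ} (hn : 1 < r.num) : ((r.num.toNat : ℕ) : ℚ) = (r.num : ℚ) := by
  have : (r.num.toNat : ℤ) = r.num := Int.toNat_of_nonneg (by omega)
  exact_mod_cast congrArg (fun z : ℤ => (z : ℚ)) this

lemma pump_step {r x : ℚ} (h0 : 0 < r) (h1 : r < 1) (hn : 1 < r.num) {α : ℕ →₀ ℕ} {i : ℕ}
    (hα : IsFactorization r x α) (hi : r.num.toNat ≤ α i) :
    ∃ (β : ℕ →₀ ℕ) (j : ℕ), IsFactorization r x β ∧ flen α < flen β ∧ r.num.toNat ≤ β j := by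
  obtain ⟨γ, hγ⟩ := exists_decomp hi
  have hnd : r.num.toNat < r.den := by
    have := num_lt_den h1
    omega
  refine ⟨γ + single (i+1) r.den, i+1, ?_, ?_, ?_⟩
  · rw [isFact_iff, L_add, L_single, ← hα, hγ]
    show L r γ + (r.den : ℚ) * r ^ (i+1) = L r (γ + single i r.num.toNat)
    rw [L_add, L_single, toNat_cast hn]
    linarith [den_rel r i]
  · rw [hγ, flen_add, flen_add, flen_single, flen_single]
    omega
  · rw [Finsupp.add_apply, Finsupp.single_eq_same]
    omega

lemma unbounded_of_big {r x : ℚ} (h0 : 0 < r) (h1 : r < 1) (hn : 1 < r.num)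
    (hx : ∃ (α : ℕ →₀ ℕ) (i : ℕ), IsFactorization r x α ∧ r.num.toNat ≤ α i) :
    ¬ BddAbove (lengthSet r x) := by
  have key : ∀ k : ℕ, ∃ (α : ℕ →₀ ℕ) (i : ℕ),
      IsFactorization r x α ∧ r.num.toNat ≤ α i ∧ k ≤ flen α := by
    intro k
    induction k with
    | zero => obtain ⟨α, i, h1', h2'⟩ := hx; exact ⟨α, i, h1', h2', Nat.zero_le _⟩
    | succ k ih =>
        obtain ⟨α, i, hα, hi, hk⟩ := ih
        obtain ⟨β, j, hβ, hlt, hj⟩ := pump_step h0 h1 hn hα hi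
        exact ⟨β, j, hβ, hj, by omega⟩
  rintro ⟨b, hb⟩
  obtain ⟨α, i, hα, _, hk⟩ := key (b + 1)
  have : flen α ≤ b := hb ⟨α, hα, rfl⟩
  omega

lemma big_of_two_facts {r x : ℚ} (hn : 1 < r.num) {α β : ℕ →₀ ℕ}
    (hα : IsFactorization r x α) (hβ : IsFactorization r x β) (hne : α ≠ β) :
    ∃ (γ : ℕ →₀ ℕ) (i : ℕ), IsFactorization r x γ ∧ r.num.toNat ≤ γ i := by
  classical
  have hex : ∃ j, α j ≠ β j := by
    by_contra hc
    push_neg at hc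
    exact hne (Finsupp.ext hc)
  obtain ⟨i, hdiff, hlt⟩ : ∃ i, α i ≠ β i ∧ ∀ j < i, α j = β j :=
    ⟨Nat.find hex, Nat.find_spec hex, fun j hj => by
      by_contra hc; exact Nat.find_min hex hj hc⟩
  have hdvd : r.num ∣ ((α i : ℤ) - β i) := num_dvd_sub hn hα hβ i hlt
  rcases Nat.lt_or_ge (α i) (β i) with hc | hc
  · refine ⟨β, i, hβ, ?_⟩
    have hdvd' : r.num ∣ ((β i : ℤ) - α i) := by
      have h' := dvd_neg.mpr hdvd
      rwa [neg_sub] at h'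
    have := Int.le_of_dvd (by omega : (0:ℤ) < (β i : ℤ) - α i) hdvd'
    omega
  · have hc' : α i ≠ β i := hdiff
    refine ⟨α, i, hα, ?_⟩
    have := Int.le_of_dvd (by omega : (0:ℤ) < (α i : ℤ) - β i) hdvd
    omega

end Aux

theorem stmt7 (r : ℚ) (h0 : 0 < r) (h1 : r < 1) (hn : 1 < r.num) :
    {e : ℝ≥0∞ | ∃ x ∈ S r, elast r x = e} = {1, ⊤} := by
  classical
  have hALS := Aux.atomLengthSet_eq h0 h1 hn
  ext e
  simp only [Set.mem_setOf_eq, Set.mem_insert_iff, Set.mem_singleton_iff]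
  constructor
  · rintro ⟨x, hx, rfl⟩
    by_cases hx0 : x = 0
    · left; simp [elast, hx0]
    by_cases hbdd : BddAbove (atomLengthSet r x)
    · left
      obtain ⟨α, hα⟩ := (Aux.mem_S_iff r x).mp hx
      have ht0 : flen α ≠ 0 := fun h =>
        hx0 (by rw [Aux.flen_eq_zero h] at hα; simpa [IsFactorization] using hα.symm)
      have hset : atomLengthSet r x = {flen α} := by
        rw [hALS]
        apply Set.eq_singleton_iff_unique_mem.mpr
        refine ⟨⟨α, hα, rfl⟩, ?_⟩
        rintro t ⟨β, hβ, rfl⟩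
        by_contra hne
        have hαβ : β ≠ α := fun h => hne (by rw [h])
        have hu := Aux.unbounded_of_big h0 h1 hn (Aux.big_of_two_facts hn hβ hα hαβ)
        rw [← hALS] at hu
        exact hu hbdd
      rw [elast, if_neg hx0, if_pos hbdd, hset]
      simp only [csSup_singleton, csInf_singleton]
      rw [ENNReal.div_self (by exact_mod_cast ht0) (by simp)]
    · right
      rw [elast, if_neg hx0, if_neg hbdd]
  · rintro (rfl | rfl)
    · exact ⟨0, (S r).zero_mem, by simp [elast]⟩
    · refine ⟨((r.num.toNat : ℕ) : ℚ), ?_, ?_⟩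
      · apply (Aux.mem_S_iff r _).mpr
        exact ⟨Finsupp.single 0 r.num.toNat, by simp [IsFactorization, Finsupp.sum_single_index]⟩
      · have hx0 : ((r.num.toNat : ℕ) : ℚ) ≠ 0 := Nat.cast_ne_zero.mpr (by omega)
        have hbig : ∃ (α : ℕ →₀ ℕ) (i : ℕ),
            IsFactorization r ((r.num.toNat : ℕ) : ℚ) α ∧ r.num.toNat ≤ α i :=
          ⟨Finsupp.single 0 r.num.toNat, 0, by simp [IsFactorization, Finsupp.sum_single_index],
            by simp⟩
        have hunb := Aux.unbounded_of_big h0 h1 hn hbig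
        rw [← hALS] at hunb
        rw [elast, if_neg hx0, if_neg hunb]
end

section
/- Let r ∈ ℚ_{>0} \ ℕ with n(r) = d(r) + 1 (so r > 1 and S_r is atomic). Then ρ(x) < ∞ for every x ∈ S_r, and for every rational q ≥ 1 there exists x ∈ S_r with ρ(x) = q; that is, the set of elasticities R(S_r) = { ρ(x) : x ∈ S_r } equals ℚ ∩ [1, ∞), so S_r is fully elastic. -/
open Finsupp
open scoped ENNReal

namespace PM


noncomputable def valh (r : ℚ) : (ℕ →₀ ℕ) →+ ℚ :=
  Finsupp.liftAddHom fun i => (AddMonoidHom.mulRight (r ^ i)).comp (Nat.castAddMonoidHom ℚ)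

lemma valh_apply (r : ℚ) (α : ℕ →₀ ℕ) : valh r α = α.sum fun i c => (c : ℚ) * r ^ i := by
  rw [valh, Finsupp.liftAddHom_apply]; rfl

lemma isFact_iff (r x : ℚ) (α : ℕ →₀ ℕ) : IsFactorization r x α ↔ valh r α = x := by
  rw [IsFactorization, valh_apply]

lemma valh_single (r : ℚ) (i c : ℕ) : valh r (Finsupp.single i c) = (c : ℚ) * r ^ i := by
  rw [valh, Finsupp.liftAddHom_apply_single]; rfl


noncomputable def flenh : (ℕ →₀ ℕ) →+ ℕ :=
  Finsupp.liftAddHom fun _ => AddMonoidHom.id ℕ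

lemma flenh_apply (α : ℕ →₀ ℕ) : flenh α = flen α := by
  rw [flenh, Finsupp.liftAddHom_apply]; rfl

lemma flen_add (α β : ℕ →₀ ℕ) : flen (α + β) = flen α + flen β := by
  rw [← flenh_apply, ← flenh_apply, ← flenh_apply, map_add]

lemma flen_single (i c : ℕ) : flen (Finsupp.single i c) = c := by
  rw [← flenh_apply, flenh, Finsupp.liftAddHom_apply_single]; rfl

lemma le_flen (α : ℕ →₀ ℕ) (i : ℕ) : α i ≤ flen α := by
  classical
  conv_rhs => rw [← Finsupp.single_add_erase i α]
  rw [flen_add, flen_single]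
  exact Nat.le_add_right _ _

lemma flen_eq_zero {α : ℕ →₀ ℕ} (h : flen α = 0) : α = 0 := by
  ext i; exact Nat.le_zero.1 (h ▸ le_flen α i)

section
variable {r : ℚ} (h0 : 0 < r) (hd : r.den ≠ 1) (hnd : r.num = (r.den : ℤ) + 1)

include hd in
lemma two_le_d : 2 ≤ r.den := by
  rcases Nat.lt_or_ge r.den 2 with h | h
  · interval_cases h' : r.den <;> simp_all [Rat.den_nz]
  · exact h

include hnd in
lemma dr_eq : (r.den : ℚ) * r = (r.den : ℚ) + 1 := by
  have h : r * (r.den : ℚ) = r.num := Rat.mul_den_eq_num r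
  rw [mul_comm, h, hnd]; push_cast; ring

include h0 hnd in
lemma one_le_r : 1 ≤ r := by
  have h := dr_eq (r := r) hnd
  have hden : (0:ℚ) < (r.den : ℚ) := by exact_mod_cast r.pos
  nlinarith

include h0 hnd in
lemma flen_le_valh (α : ℕ →₀ ℕ) : (flen α : ℚ) ≤ valh r α := by
  rw [valh_apply, flen, Finsupp.sum, Finsupp.sum, Nat.cast_sum]
  apply Finset.sum_le_sum
  intro i _
  have h1 : (1:ℚ) ≤ r ^ i := one_le_pow₀ (one_le_r h0 hnd)
  nlinarith [Nat.cast_nonneg (α := ℚ) (α i)]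


lemma valh_mem (α : ℕ →₀ ℕ) : valh r α ∈ S r := by
  classical
  induction α using Finsupp.induction with
  | zero => simp only [map_zero]; exact (S r).zero_mem
  | single_add i c f hi hc ih =>
    rw [map_add]
    refine (S r).add_mem ?_ ih
    rw [valh_single]
    have hg : r ^ i ∈ S r := AddSubmonoid.subset_closure ⟨i, rfl⟩
    have := AddSubmonoid.nsmul_mem (S r) hg c
    simpa [nsmul_eq_mul] using this

lemma mem_iff_exists {x : ℚ} : x ∈ S r ↔ ∃ α : ℕ →₀ ℕ, valh r α = x := by
  constructor
  · intro hx
    induction hx using AddSubmonoid.closure_induction with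
    | mem y hy => obtain ⟨n, rfl⟩ := hy; exact ⟨Finsupp.single n 1, by simp [valh_single]⟩
    | zero => exact ⟨0, by simp⟩
    | add y z _ _ hy hz =>
      obtain ⟨a, ha⟩ := hy; obtain ⟨b, hb⟩ := hz
      exact ⟨a + b, by rw [map_add, ha, hb]⟩
  · rintro ⟨α, rfl⟩; exact valh_mem α

lemma update_apply' (f : ℕ →₀ ℕ) (a b j : ℕ) : (f.update a b) j = if j = a then b else f j := by
  classical
  rw [Finsupp.coe_update]; exact Function.update_apply f a b j

lemma split_at (α : ℕ →₀ ℕ) (i c : ℕ) (h : c ≤ α i) :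
    α = Finsupp.single i c + α.update i (α i - c) := by
  classical
  ext j
  rw [Finsupp.add_apply, update_apply', Finsupp.single_apply]
  by_cases hj : j = i
  · subst hj; simp [Nat.add_sub_cancel' h]
  · simp [hj, Ne.symm hj]

include hnd in
lemma key_pow (i : ℕ) : (r.den : ℚ) * r ^ (i+1) = ((r.den : ℚ) + 1) * r ^ i := by
  have h := dr_eq (r := r) hnd
  rw [pow_succ]
  linear_combination r ^ i * h

include hnd in
lemma carry (α : ℕ →₀ ℕ) (i : ℕ) (h : r.den + 1 ≤ α i) :
    ∃ β : ℕ →₀ ℕ, valh r β = valh r α ∧ flen β + 1 = flen α := by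
  classical
  set δ := α.update i (α i - (r.den + 1)) with hδ
  refine ⟨Finsupp.single (i+1) r.den + δ, ?_, ?_⟩
  · have hsplit := split_at α i (r.den + 1) h
    conv_rhs => rw [hsplit]
    rw [map_add, map_add, valh_single, valh_single]
    have := key_pow (r := r) hnd i
    push_cast
    nlinarith [this]
  · have hsplit := split_at α i (r.den + 1) h
    conv_rhs => rw [hsplit]
    rw [flen_add, flen_add, flen_single, flen_single]
    ring

include hnd in
lemma anticarry (α : ℕ →₀ ℕ) (i : ℕ) (h : r.den ≤ α (i+1)) :
    ∃ β : ℕ →₀ ℕ, valh r β = valh r α ∧ flen β = flen α + 1 := by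
  classical
  set δ := α.update (i+1) (α (i+1) - r.den) with hδ
  refine ⟨Finsupp.single i (r.den + 1) + δ, ?_, ?_⟩
  · have hsplit := split_at α (i+1) r.den h
    conv_rhs => rw [hsplit]
    rw [map_add, map_add, valh_single, valh_single]
    have := key_pow (r := r) hnd i
    push_cast
    nlinarith [this]
  · have hsplit := split_at α (i+1) r.den h
    conv_rhs => rw [hsplit]
    rw [flen_add, flen_add, flen_single, flen_single]
    ring

def Reduced (r : ℚ) (α : ℕ →₀ ℕ) : Prop := ∀ i, α i ≤ r.den
def Maximal (r : ℚ) (α : ℕ →₀ ℕ) : Prop := ∀ i, 1 ≤ i → α i < r.den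

include hnd in
lemma exists_reduced (α : ℕ →₀ ℕ) :
    ∃ β : ℕ →₀ ℕ, valh r β = valh r α ∧ flen β ≤ flen α ∧ Reduced r β := by
  classical
  suffices H : ∀ L (α : ℕ →₀ ℕ), flen α ≤ L →
      ∃ β : ℕ →₀ ℕ, valh r β = valh r α ∧ flen β ≤ flen α ∧ Reduced r β from
    H (flen α) α le_rfl
  intro L
  induction L with
  | zero =>
    intro α hα
    have : α = 0 := flen_eq_zero (Nat.le_zero.1 hα)
    exact ⟨α, rfl, le_rfl, fun i => by simp [this]⟩
  | succ L ih =>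
    intro α hα
    by_cases hred : ∀ i ∈ α.support, α i ≤ r.den
    · refine ⟨α, rfl, le_rfl, fun i => ?_⟩
      by_cases hi : i ∈ α.support
      · exact hred i hi
      · simp [Finsupp.notMem_support_iff.1 hi]
    · push_neg at hred
      obtain ⟨i, _, hi⟩ := hred
      obtain ⟨β, hv, hf⟩ := carry (r := r) hnd α i hi
      obtain ⟨γ, hv2, hf2, hg⟩ := ih β (by omega)
      exact ⟨γ, hv2.trans hv, by omega, hg⟩

include h0 hnd in
lemma exists_maximal (α : ℕ →₀ ℕ) :
    ∃ β : ℕ →₀ ℕ, valh r β = valh r α ∧ flen α ≤ flen β ∧ Maximal r β := by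
  classical
  suffices H : ∀ fuel (α : ℕ →₀ ℕ), ⌈valh r α⌉₊ ≤ flen α + fuel →
      ∃ β : ℕ →₀ ℕ, valh r β = valh r α ∧ flen α ≤ flen β ∧ Maximal r β from
    H ⌈valh r α⌉₊ α (by omega)
  intro fuel
  induction fuel with
  | zero =>
    intro α hfuel
    by_cases hmax : ∀ i ∈ α.support, 1 ≤ i → α i < r.den
    · refine ⟨α, rfl, le_rfl, fun i h1 => ?_⟩
      by_cases hi : i ∈ α.support
      · exact hmax i hi h1
      · have h2 := Finsupp.notMem_support_iff.1 hi
        have := r.pos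
        omega
    · exfalso
      push_neg at hmax
      obtain ⟨i, _, h1, hi⟩ := hmax
      obtain ⟨j, rfl⟩ : ∃ j, i = j + 1 := ⟨i - 1, by omega⟩
      obtain ⟨β, hv, hf⟩ := anticarry (r := r) hnd α j hi
      have hle : (flen β : ℚ) ≤ valh r β := flen_le_valh h0 hnd β
      rw [hv] at hle
      have hceil : flen β ≤ ⌈valh r α⌉₊ := by
        have h2 : (flen β : ℚ) ≤ (⌈valh r α⌉₊ : ℚ) := hle.trans (Nat.le_ceil _)
        exact_mod_cast h2
      omega
  | succ fuel ih =>
    intro α hfuel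
    by_cases hmax : ∀ i ∈ α.support, 1 ≤ i → α i < r.den
    · refine ⟨α, rfl, le_rfl, fun i h1 => ?_⟩
      by_cases hi : i ∈ α.support
      · exact hmax i hi h1
      · have h2 := Finsupp.notMem_support_iff.1 hi
        have := r.pos
        omega
    · push_neg at hmax
      obtain ⟨i, _, h1, hi⟩ := hmax
      obtain ⟨j, rfl⟩ : ∃ j, i = j + 1 := ⟨i - 1, by omega⟩
      obtain ⟨β, hv, hf⟩ := anticarry (r := r) hnd α j hi
      obtain ⟨γ, hv2, hf2, hg⟩ := ih β (by rw [hv]; omega)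
      exact ⟨γ, hv2.trans hv, by omega, hg⟩

/-- Integer (natural) version of `valh`, scaled by `d^K`. -/
noncomputable def ivh (r : ℚ) (K : ℕ) : (ℕ →₀ ℕ) →+ ℕ :=
  Finsupp.liftAddHom fun i => AddMonoidHom.mulRight ((r.den + 1) ^ i * r.den ^ (K - i))

lemma ivh_apply (K : ℕ) (α : ℕ →₀ ℕ) :
    ivh r K α = α.sum fun i c => c * ((r.den + 1) ^ i * r.den ^ (K - i)) := by
  rw [ivh, Finsupp.liftAddHom_apply]; rfl

lemma ivh_single (K i c : ℕ) :
    ivh r K (Finsupp.single i c) = c * ((r.den + 1) ^ i * r.den ^ (K - i)) := by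
  rw [ivh, Finsupp.liftAddHom_apply_single]; rfl

include hnd in
lemma pow_eq (i K : ℕ) (h : i ≤ K) :
    ((r.den : ℚ)) ^ K * r ^ i = (((r.den + 1 : ℕ) : ℚ)) ^ i * ((r.den : ℚ)) ^ (K - i) := by
  have h1 : ((r.den : ℚ)) ^ i * r ^ i = ((r.den : ℚ) + 1) ^ i := by
    rw [← mul_pow, dr_eq hnd]
  have h2 : ((r.den : ℚ)) ^ K = (r.den : ℚ) ^ (K - i) * (r.den : ℚ) ^ i := by
    rw [← pow_add]; congr 1; omega
  push_cast
  rw [h2]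
  linear_combination ((r.den : ℚ)) ^ (K - i) * h1

include hnd in
lemma ivh_cast (K : ℕ) (α : ℕ →₀ ℕ) (hK : ∀ i ∈ α.support, i ≤ K) :
    ((ivh r K α : ℕ) : ℚ) = (r.den : ℚ) ^ K * valh r α := by
  rw [valh_apply, ivh_apply, Finsupp.sum, Finsupp.sum, Finset.mul_sum, Nat.cast_sum]
  refine Finset.sum_congr rfl fun i hi => ?_
  have hp := pow_eq (r := r) hnd i K (hK i hi)
  push_cast at hp ⊢
  linear_combination (-(α i : ℚ)) * hp

include hnd in
lemma cong_bot {α β : ℕ →₀ ℕ} (hv : valh r α = valh r β) :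
    α 0 ≡ β 0 [MOD r.den + 1] := by
  classical
  set K := (α.support ∪ β.support).sup id with hKdef
  have hKα : ∀ i ∈ α.support, i ≤ K := fun i hi =>
    Finset.le_sup (f := id) (Finset.mem_union_left _ hi)
  have hKβ : ∀ i ∈ β.support, i ≤ K := fun i hi =>
    Finset.le_sup (f := id) (Finset.mem_union_right _ hi)
  have hiv : ivh r K α = ivh r K β := by
    have := ivh_cast (r := r) hnd K α hKα
    rw [hv, ← ivh_cast (r := r) hnd K β hKβ] at this
    exact_mod_cast this
  have key : ∀ γ : ℕ →₀ ℕ, ivh r K γ ≡ γ 0 * r.den ^ K [MOD r.den + 1] := by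
    intro γ
    conv_lhs => rw [← Finsupp.single_add_erase 0 γ]
    rw [map_add, ivh_single]
    have hdvd : (r.den + 1) ∣ ivh r K (Finsupp.erase 0 γ) := by
      rw [ivh_apply, Finsupp.sum]
      refine Finset.dvd_sum fun i hi => ?_
      have hi0 : i ≠ 0 := by
        rw [Finsupp.support_erase] at hi
        exact Finset.ne_of_mem_erase hi
      obtain ⟨j, rfl⟩ : ∃ j, i = j + 1 := ⟨i - 1, by omega⟩
      exact Dvd.dvd.mul_left (Dvd.dvd.mul_right (dvd_pow_self _ (Nat.succ_ne_zero j)) _) _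
    obtain ⟨m, hm⟩ := hdvd
    rw [hm]
    simp [Nat.ModEq, pow_zero, one_mul, Nat.add_mul_mod_self_left]
  have h1 := key α
  have h2 := key β
  have h3 : α 0 * r.den ^ K ≡ β 0 * r.den ^ K [MOD r.den + 1] :=
    (h1.symm.trans (hiv ▸ h2))
  have hco : (r.den + 1).gcd (r.den ^ K) = 1 := by
    refine Nat.Coprime.pow_right _ ?_
    simp [Nat.Coprime, Nat.gcd_comm]
  exact Nat.ModEq.cancel_right_of_coprime hco h3

include hnd in
lemma cong_top {α β : ℕ →₀ ℕ} (K : ℕ) (hKα : ∀ i ∈ α.support, i ≤ K)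
    (hKβ : ∀ i ∈ β.support, i ≤ K) (hv : valh r α = valh r β) :
    α K ≡ β K [MOD r.den] := by
  classical
  have hiv : ivh r K α = ivh r K β := by
    have := ivh_cast (r := r) hnd K α hKα
    rw [hv, ← ivh_cast (r := r) hnd K β hKβ] at this
    exact_mod_cast this
  have key : ∀ γ : ℕ →₀ ℕ, (∀ i ∈ γ.support, i ≤ K) →
      ivh r K γ ≡ γ K * ((r.den + 1) ^ K * r.den ^ (K - K)) [MOD r.den] := by
    intro γ hKγ
    conv_lhs => rw [← Finsupp.single_add_erase K γ]
    rw [map_add, ivh_single]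
    have hdvd : r.den ∣ ivh r K (Finsupp.erase K γ) := by
      rw [ivh_apply, Finsupp.sum]
      refine Finset.dvd_sum fun i hi => ?_
      have hiK : i < K := by
        rw [Finsupp.support_erase] at hi
        have := Finset.ne_of_mem_erase hi
        have := hKγ i (Finset.mem_of_mem_erase hi)
        omega
      have : r.den ∣ r.den ^ (K - i) := dvd_pow_self _ (by omega)
      exact Dvd.dvd.mul_left (Dvd.dvd.mul_left this _) _
    obtain ⟨m, hm⟩ := hdvd
    rw [hm]
    simp [Nat.ModEq, Nat.add_mul_mod_self_left]
  have h1 := key α hKα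
  have h2 := key β hKβ
  have h3 : α K * ((r.den + 1) ^ K * r.den ^ (K - K)) ≡
      β K * ((r.den + 1) ^ K * r.den ^ (K - K)) [MOD r.den] :=
    (h1.symm.trans (hiv ▸ h2))
  have hco : (r.den).gcd ((r.den + 1) ^ K * r.den ^ (K - K)) = 1 := by
    simp only [Nat.sub_self, pow_zero, mul_one]
    refine Nat.Coprime.pow_right _ ?_
    simp [Nat.Coprime]
  exact Nat.ModEq.cancel_right_of_coprime hco h3

/-- shift down -/
noncomputable def tail (α : ℕ →₀ ℕ) : ℕ →₀ ℕ :=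
  Finsupp.comapDomain Nat.succ α (Nat.succ_injective.injOn)

lemma tail_apply (α : ℕ →₀ ℕ) (i : ℕ) : tail α i = α (i + 1) := by
  rw [tail, Finsupp.comapDomain_apply]

lemma tail_decomp (α : ℕ →₀ ℕ) :
    α = Finsupp.single 0 (α 0) + Finsupp.mapDomain Nat.succ (tail α) := by
  ext j
  rw [Finsupp.add_apply]
  cases j with
  | zero =>
    rw [Finsupp.mapDomain_notin_range]
    · simp
    · rintro ⟨a, ha⟩; exact Nat.succ_ne_zero a ha
  | succ j =>
    rw [Finsupp.single_apply, Finsupp.mapDomain_apply Nat.succ_injective, tail_apply]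
    simp

lemma valh_mapDomain_succ (γ : ℕ →₀ ℕ) :
    valh r (Finsupp.mapDomain Nat.succ γ) = r * valh r γ := by
  rw [valh_apply, valh_apply, Finsupp.sum_mapDomain_index (by simp) (by
    intro b m₁ m₂; push_cast; ring)]
  rw [Finsupp.sum, Finsupp.sum, Finset.mul_sum]
  refine Finset.sum_congr rfl fun i _ => ?_
  rw [pow_succ]
  ring

lemma valh_eq_head_add (α : ℕ →₀ ℕ) :
    valh r α = (α 0 : ℚ) + r * valh r (tail α) := by
  conv_lhs => rw [tail_decomp α]
  rw [map_add, valh_single, valh_mapDomain_succ]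
  simp

include h0 hnd in
lemma reduced_unique : ∀ (K : ℕ) (α β : ℕ →₀ ℕ), (∀ i ∈ α.support, i < K) →
    (∀ i ∈ β.support, i < K) → Reduced r α → Reduced r β → valh r α = valh r β → α = β := by
  intro K
  induction K with
  | zero =>
    intro α β hα hβ _ _ _
    have h1 : α = 0 := by
      rw [← Finsupp.support_eq_empty]
      exact Finset.eq_empty_of_forall_notMem fun i hi => Nat.not_lt_zero i (hα i hi)
    have h2 : β = 0 := by
      rw [← Finsupp.support_eq_empty]
      exact Finset.eq_empty_of_forall_notMem fun i hi => Nat.not_lt_zero i (hβ i hi)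
    rw [h1, h2]
  | succ K ih =>
    intro α β hα hβ hrα hrβ hv
    have h00 : α 0 = β 0 := by
      refine Nat.ModEq.eq_of_lt_of_lt (cong_bot (r := r) hnd hv) ?_ ?_
      · exact Nat.lt_succ_of_le (hrα 0)
      · exact Nat.lt_succ_of_le (hrβ 0)
    have htv : valh r (tail α) = valh r (tail β) := by
      have e1 := valh_eq_head_add (r := r) α
      have e2 := valh_eq_head_add (r := r) β
      rw [e1, e2, h00] at hv
      have := add_left_cancel hv
      exact mul_left_cancel₀ (ne_of_gt h0) this
    have htail : tail α = tail β := by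
      refine ih (tail α) (tail β) ?_ ?_ ?_ ?_ htv
      · intro i hi
        have : tail α i ≠ 0 := Finsupp.mem_support_iff.1 hi
        rw [tail_apply] at this
        have := hα (i + 1) (Finsupp.mem_support_iff.2 this)
        omega
      · intro i hi
        have : tail β i ≠ 0 := Finsupp.mem_support_iff.1 hi
        rw [tail_apply] at this
        have := hβ (i + 1) (Finsupp.mem_support_iff.2 this)
        omega
      · intro i; rw [tail_apply]; exact hrα (i + 1)
      · intro i; rw [tail_apply]; exact hrβ (i + 1)
    ext j
    cases j with
    | zero => exact h00
    | succ j =>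
      have := DFunLike.congr_fun htail j
      simpa [tail_apply] using this

include hnd in
lemma maximal_unique : ∀ (K : ℕ) (α β : ℕ →₀ ℕ), (∀ i ∈ α.support, i ≤ K) →
    (∀ i ∈ β.support, i ≤ K) → Maximal r α → Maximal r β → valh r α = valh r β → α = β := by
  intro K
  induction K with
  | zero =>
    intro α β hα hβ _ _ hv
    have e1 : α = Finsupp.single 0 (α 0) := by
      ext j
      rw [Finsupp.single_apply]
      by_cases hj : j = 0
      · subst hj; simp
      · rw [if_neg (show ¬(0 = j) from fun h => hj h.symm)]
        by_contra hne
        have := hα j (Finsupp.mem_support_iff.2 hne)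
        omega
    have e2 : β = Finsupp.single 0 (β 0) := by
      ext j
      rw [Finsupp.single_apply]
      by_cases hj : j = 0
      · subst hj; simp
      · rw [if_neg (show ¬(0 = j) from fun h => hj h.symm)]
        by_contra hne
        have := hβ j (Finsupp.mem_support_iff.2 hne)
        omega
    have hval : (α 0 : ℚ) = (β 0 : ℚ) := by
      rw [e1, e2] at hv
      rw [valh_single, valh_single] at hv
      simpa using hv
    have : α 0 = β 0 := by exact_mod_cast hval
    rw [e1, e2, this]
  | succ K ih =>
    intro α β hα hβ hmα hmβ hv
    have hKK : α (K + 1) = β (K + 1) := by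
      refine Nat.ModEq.eq_of_lt_of_lt (cong_top (r := r) hnd (K + 1) hα hβ hv) ?_ ?_
      · exact hmα (K + 1) (by omega)
      · exact hmβ (K + 1) (by omega)
    have he : valh r (Finsupp.erase (K + 1) α) = valh r (Finsupp.erase (K + 1) β) := by
      have d1 : valh r α = valh r (Finsupp.single (K + 1) (α (K + 1))) +
          valh r (Finsupp.erase (K + 1) α) := by
        conv_lhs => rw [← Finsupp.single_add_erase (K + 1) α]
        rw [map_add]
      have d2 : valh r β = valh r (Finsupp.single (K + 1) (β (K + 1))) +
          valh r (Finsupp.erase (K + 1) β) := by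
        conv_lhs => rw [← Finsupp.single_add_erase (K + 1) β]
        rw [map_add]
      rw [d1, d2, hKK] at hv
      exact add_left_cancel hv
    have herase : Finsupp.erase (K + 1) α = Finsupp.erase (K + 1) β := by
      classical
      refine ih _ _ ?_ ?_ ?_ ?_ he
      · intro i hi
        rw [Finsupp.support_erase] at hi
        have h1 := Finset.ne_of_mem_erase hi
        have h2 := hα i (Finset.mem_of_mem_erase hi)
        omega
      · intro i hi
        rw [Finsupp.support_erase] at hi
        have h1 := Finset.ne_of_mem_erase hi
        have h2 := hβ i (Finset.mem_of_mem_erase hi)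
        omega
      · intro i h1
        by_cases hi : i = K + 1
        · subst hi; rw [Finsupp.erase_same]; have := r.pos; omega
        · rw [Finsupp.erase_ne hi]; exact hmα i h1
      · intro i h1
        by_cases hi : i = K + 1
        · subst hi; rw [Finsupp.erase_same]; have := r.pos; omega
        · rw [Finsupp.erase_ne hi]; exact hmβ i h1
    ext j
    by_cases hj : j = K + 1
    · subst hj; exact hKK
    · have := DFunLike.congr_fun herase j
      simpa [Finsupp.erase_ne hj] using this

include h0 hnd in
lemma valh_pos {α : ℕ →₀ ℕ} (hα : α ≠ 0) : 0 < valh r α := by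
  have h1 : flen α ≠ 0 := fun h => hα (flen_eq_zero h)
  have h2 := flen_le_valh h0 hnd α
  have : (1 : ℚ) ≤ (flen α : ℚ) := by exact_mod_cast Nat.one_le_iff_ne_zero.2 h1
  linarith

include h0 hd hnd in
lemma fact_pow_flen {k : ℕ} {α : ℕ →₀ ℕ} (hv : valh r α = r ^ k) : flen α ≤ 1 := by
  classical
  obtain ⟨β, hvb, hfb, hmb⟩ := exists_maximal h0 hnd α
  have hms : Maximal r (Finsupp.single k 1) := by
    intro i _
    have h2 := two_le_d (r := r) hd
    rw [Finsupp.single_apply]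
    split <;> omega
  have hvs : valh r (Finsupp.single k 1) = r ^ k := by rw [valh_single]; simp
  set K := max (β.support.sup id) k with hK
  have hβK : ∀ i ∈ β.support, i ≤ K := fun i hi =>
    le_max_of_le_left (Finset.le_sup (f := id) hi)
  have hsK : ∀ i ∈ (Finsupp.single k 1).support, i ≤ K := by
    intro i hi
    have := Finsupp.support_single_subset hi
    simp only [Finset.mem_singleton] at this
    subst this; exact le_max_right _ _
  have hβs : β = Finsupp.single k 1 :=
    maximal_unique (r := r) hnd K β (Finsupp.single k 1) hβK hsK hmb hms
      (by rw [hvb, hv, hvs])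
  have : flen β = 1 := by rw [hβs, flen_single]
  omega

include h0 hd hnd in
lemma isAtom_pow (k : ℕ) : IsAtomS r (r ^ k) := by
  refine ⟨?_, pow_ne_zero k (ne_of_gt h0), ?_⟩
  · have := valh_mem (r := r) (Finsupp.single k 1)
    rwa [valh_single, Nat.cast_one, one_mul] at this
  · rintro ⟨y, z, hy, hz, hy0, hz0, heq⟩
    obtain ⟨γ, hγ⟩ := (mem_iff_exists (r := r)).1 hy
    obtain ⟨δ, hδ⟩ := (mem_iff_exists (r := r)).1 hz
    have hγ0 : γ ≠ 0 := fun h => hy0 (by rw [← hγ, h, map_zero])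
    have hδ0 : δ ≠ 0 := fun h => hz0 (by rw [← hδ, h, map_zero])
    have hv : valh r (γ + δ) = r ^ k := by rw [map_add, hγ, hδ, ← heq]
    have h1 : 1 ≤ flen γ := Nat.one_le_iff_ne_zero.2 fun h => hγ0 (flen_eq_zero h)
    have h2 : 1 ≤ flen δ := Nat.one_le_iff_ne_zero.2 fun h => hδ0 (flen_eq_zero h)
    have := fact_pow_flen h0 hd hnd hv
    rw [flen_add] at this
    omega

include h0 hnd in
lemma atom_pow {a : ℚ} (ha : IsAtomS r a) : ∃ k : ℕ, a = r ^ k := by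
  classical
  obtain ⟨α, hα⟩ := (mem_iff_exists (r := r)).1 ha.1
  have hα0 : α ≠ 0 := fun h => ha.2.1 (by rw [← hα, h, map_zero])
  obtain ⟨i, hi⟩ := Finsupp.support_nonempty_iff.2 hα0
  have hi1 : 1 ≤ α i := Nat.one_le_iff_ne_zero.2 (Finsupp.mem_support_iff.1 hi)
  have hsplit := split_at α i 1 hi1
  set δ := α.update i (α i - 1) with hδ
  by_cases hδ0 : δ = 0
  · refine ⟨i, ?_⟩
    rw [← hα, hsplit, hδ0, add_zero, valh_single, Nat.cast_one, one_mul]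
  · exfalso
    refine ha.2.2 ⟨r ^ i, valh r δ, ?_, valh_mem δ, pow_ne_zero i (ne_of_gt h0),
      ne_of_gt (valh_pos h0 hnd hδ0), ?_⟩
    · have := valh_mem (r := r) (Finsupp.single i 1)
      rwa [valh_single, Nat.cast_one, one_mul] at this
    · rw [← hα, hsplit, map_add, valh_single, Nat.cast_one, one_mul]

lemma list_sum_fin (l : List ℚ) : (∑ j : Fin l.length, l.get j) = l.sum := by
  induction l with
  | nil => simp
  | cons a l ih => rw [List.sum_cons, ← ih]; simp [Fin.sum_univ_succ]

set_option linter.unusedSectionVars false in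
lemma exists_list (α : ℕ →₀ ℕ) : ∃ l : List ℚ, (∀ a ∈ l, ∃ k : ℕ, a = r ^ k) ∧
    l.length = flen α ∧ l.sum = valh r α := by
  classical
  induction α using Finsupp.induction with
  | zero => exact ⟨[], by simp, by simp [flen], by simp⟩
  | single_add i c f hif hc ih =>
    obtain ⟨l, hl1, hl2, hl3⟩ := ih
    refine ⟨List.replicate c (r ^ i) ++ l, ?_, ?_, ?_⟩
    · intro a haa
      rcases List.mem_append.1 haa with h | h
      · exact ⟨i, (List.eq_of_mem_replicate h)⟩
      · exact hl1 a h
    · rw [List.length_append, List.length_replicate, hl2, flen_add, flen_single]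
    · rw [List.sum_append, List.sum_replicate, hl3, map_add, valh_single, nsmul_eq_mul]

include h0 hd hnd in
lemma atomLengthSet_eq (x : ℚ) : atomLengthSet r x = lengthSet r x := by
  classical
  ext t
  constructor
  · rintro ⟨f, hf, hsum⟩
    choose g hg using fun i => atom_pow h0 hnd (hf i)
    refine ⟨∑ i : Fin t, Finsupp.single (g i) 1, ?_, ?_⟩
    · rw [isFact_iff, map_sum]
      rw [← hsum]
      refine Finset.sum_congr rfl fun i _ => ?_
      rw [valh_single, Nat.cast_one, one_mul, ← hg i]
    · rw [← flenh_apply, map_sum]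
      simp [flenh, Finsupp.liftAddHom_apply_single]
  · rintro ⟨α, hfact, hlen⟩
    rw [isFact_iff] at hfact
    obtain ⟨l, hl1, hl2, hl3⟩ := exists_list α
    have hlt : l.length = t := by rw [hl2, hlen]
    refine ⟨fun i => l.get (Fin.cast hlt.symm i), fun i => ?_, ?_⟩
    · obtain ⟨k, hk⟩ := hl1 (l.get (Fin.cast hlt.symm i)) (List.get_mem l (Fin.cast hlt.symm i))
      simp only []
      rw [hk]; exact isAtom_pow h0 hd hnd k
    · have he : (∑ i : Fin t, l.get (Fin.cast hlt.symm i)) = ∑ j : Fin l.length, l.get j :=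
        Fintype.sum_equiv (finCongr hlt.symm) _ _ (fun i => rfl)
      simp only []
      rw [he, list_sum_fin, hl3, hfact]

set_option linter.unusedSectionVars false in
include h0 hd hnd in
lemma length_bounds {x : ℚ} {β γ : ℕ →₀ ℕ} (hvβ : valh r β = x) (hvγ : valh r γ = x)
    (hβ : Reduced r β) (hγ : Maximal r γ) :
    ∀ t ∈ lengthSet r x, flen β ≤ t ∧ t ≤ flen γ := by
  classical
  rintro t ⟨α, hfact, rfl⟩
  rw [isFact_iff] at hfact
  constructor
  · obtain ⟨β', hv', hf', hr'⟩ := exists_reduced hnd α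
    have hK : ∀ i ∈ β'.support ∪ β.support, i < (β'.support ∪ β.support).sup id + 1 :=
      fun i hi => Nat.lt_succ_of_le (Finset.le_sup (f := id) hi)
    have : β' = β := by
      refine reduced_unique h0 hnd ((β'.support ∪ β.support).sup id + 1) β' β
        (fun i hi => hK i (Finset.mem_union_left _ hi))
        (fun i hi => hK i (Finset.mem_union_right _ hi)) hr' hβ ?_
      rw [hv', hfact, hvβ]
    rw [← this]; exact hf'
  · obtain ⟨γ', hv', hf', hm'⟩ := exists_maximal h0 hnd α
    have hK : ∀ i ∈ γ'.support ∪ γ.support, i ≤ (γ'.support ∪ γ.support).sup id :=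
      fun i hi => Finset.le_sup (f := id) hi
    have : γ' = γ := by
      refine maximal_unique hnd ((γ'.support ∪ γ.support).sup id) γ' γ
        (fun i hi => hK i (Finset.mem_union_left _ hi))
        (fun i hi => hK i (Finset.mem_union_right _ hi)) hm' hγ ?_
      rw [hv', hfact, hvγ]
    rw [← this]; exact hf'

include h0 hd hnd in
lemma elast_eq {x : ℚ} (hx : x ≠ 0) {β γ : ℕ →₀ ℕ} (hvβ : valh r β = x) (hvγ : valh r γ = x)
    (hβ : Reduced r β) (hγ : Maximal r γ) :
    elast r x = (flen γ : ℝ≥0∞) / (flen β : ℝ≥0∞) ∧ 1 ≤ flen β ∧ flen β ≤ flen γ := by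
  classical
  have hmemβ : flen β ∈ lengthSet r x := ⟨β, (isFact_iff r x β).2 hvβ, rfl⟩
  have hmemγ : flen γ ∈ lengthSet r x := ⟨γ, (isFact_iff r x γ).2 hvγ, rfl⟩
  have hbounds := length_bounds h0 hd hnd hvβ hvγ hβ hγ
  have hA : atomLengthSet r x = lengthSet r x := atomLengthSet_eq h0 hd hnd x
  have hmemβ' : flen β ∈ atomLengthSet r x := hA ▸ hmemβ
  have hmemγ' : flen γ ∈ atomLengthSet r x := hA ▸ hmemγ
  have hne : (atomLengthSet r x).Nonempty := ⟨flen β, hmemβ'⟩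
  have hbdd : BddAbove (atomLengthSet r x) :=
    ⟨flen γ, fun t ht => (hbounds t (hA ▸ ht)).2⟩
  have hsup : sSup (atomLengthSet r x) = flen γ :=
    le_antisymm (csSup_le hne fun t ht => (hbounds t (hA ▸ ht)).2) (le_csSup hbdd hmemγ')
  have hinf : sInf (atomLengthSet r x) = flen β :=
    le_antisymm (Nat.sInf_le hmemβ') (le_csInf hne fun t ht => (hbounds t (hA ▸ ht)).1)
  have hβ1 : 1 ≤ flen β := by
    rcases Nat.eq_zero_or_pos (flen β) with h | h
    · exact absurd (by rw [← hvβ, flen_eq_zero h, map_zero]) hx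
    · exact h
  refine ⟨?_, hβ1, (hbounds _ hmemγ).1⟩
  rw [elast, if_neg hx, if_pos hbdd, hsup, hinf]

include hnd in
lemma geom_id (m : ℕ) :
    (r.den : ℚ) * r ^ (m + 1) = ((r.den : ℚ) + 1) + ∑ i ∈ Finset.Ico 1 (m + 1), r ^ i := by
  induction m with
  | zero => simpa using dr_eq (r := r) hnd
  | succ m ih =>
    rw [Finset.sum_Ico_succ_top (by omega)]
    have hkey := key_pow (r := r) hnd (m + 1)
    push_cast at hkey ⊢
    linear_combination hkey + ih

include h0 hd hnd in
lemma construct (p q' : ℕ) (hq'1 : 1 ≤ q') (hlt : q' < p) :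
    ∃ x, x ∈ S r ∧ elast r x = ((p * r.den : ℕ) : ℝ≥0∞) / ((q' * r.den : ℕ) : ℝ≥0∞) := by
  classical
  have hd2 := two_le_d (r := r) hd
  obtain ⟨a, ha1, rfl⟩ : ∃ a, 1 ≤ a ∧ p = q' + a := ⟨p - q', by omega, by omega⟩
  obtain ⟨b, rfl⟩ : ∃ b, q' = b + 1 := ⟨q' - 1, by omega⟩
  set d := r.den with hddef
  obtain ⟨m, hm⟩ : ∃ m, a * d = m + 1 := ⟨a * d - 1, by have := Nat.mul_pos (show 0 < a by omega) (show 0 < d by omega); omega⟩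
  set k := b * d with hkdef
  set H : ℕ →₀ ℕ := ∑ j ∈ Finset.Ico (m + 2) (m + 2 + k), Finsupp.single j 1 with hHdef
  have Happly : ∀ i, H i = if i ∈ Finset.Ico (m + 2) (m + 2 + k) then 1 else 0 := by
    intro i
    rw [hHdef, Finsupp.finset_sum_apply]
    simp_rw [Finsupp.single_apply]
    rw [Finset.sum_ite_eq' _ i (fun _ => 1)]
  have hflenH : flen H = k := by
    rw [← flenh_apply, hHdef, map_sum]
    have : ∀ j ∈ Finset.Ico (m + 2) (m + 2 + k), flenh (Finsupp.single j 1) = 1 := by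
      intro j _; rw [flenh_apply, flen_single]
    rw [Finset.sum_congr rfl this, Finset.sum_const, Nat.card_Ico, smul_eq_mul]
    omega
  have hvalH : valh r H = ∑ j ∈ Finset.Ico (m + 2) (m + 2 + k), r ^ j := by
    rw [hHdef, map_sum]
    refine Finset.sum_congr rfl fun j _ => ?_
    rw [valh_single]; simp
  set M : ℕ →₀ ℕ := ∑ i ∈ Finset.Ico 1 (m + 1), Finsupp.single i 1 with hMdef
  have Mapply : ∀ i, M i = if i ∈ Finset.Ico 1 (m + 1) then 1 else 0 := by
    intro i
    rw [hMdef, Finsupp.finset_sum_apply]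
    simp_rw [Finsupp.single_apply]
    rw [Finset.sum_ite_eq' _ i (fun _ => 1)]
  have hflenM : flen M = m := by
    rw [← flenh_apply, hMdef, map_sum]
    have : ∀ j ∈ Finset.Ico 1 (m + 1), flenh (Finsupp.single j 1) = 1 := by
      intro j _; rw [flenh_apply, flen_single]
    rw [Finset.sum_congr rfl this, Finset.sum_const, Nat.card_Ico, smul_eq_mul]
    omega
  have hvalM : valh r M = ∑ j ∈ Finset.Ico 1 (m + 1), r ^ j := by
    rw [hMdef, map_sum]
    refine Finset.sum_congr rfl fun j _ => ?_
    rw [valh_single]; simp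
  set β := Finsupp.single (m + 1) d + H with hβdef
  set γ := Finsupp.single 0 (d + 1) + M + H with hγdef
  have hvv : valh r γ = valh r β := by
    rw [hβdef, hγdef, map_add, map_add, map_add, valh_single, valh_single, hvalM]
    have := geom_id (r := r) hnd m
    push_cast
    linear_combination (-1 : ℚ) * this
  have hflenβ : flen β = (b + 1) * d := by
    rw [hβdef, flen_add, flen_single, hflenH, hkdef]; ring
  have hflenγ : flen γ = (b + 1 + a) * d := by
    rw [hγdef, flen_add, flen_add, flen_single, hflenM, hflenH, hkdef]
    have he : (b + 1 + a) * d = b * d + d + a * d := by ring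
    rw [he, hm]
    omega
  have hRβ : Reduced r β := by
    intro i
    have hH := Happly i
    rw [← hddef, hβdef, Finsupp.add_apply, Finsupp.single_apply]
    simp only [Finset.mem_Ico] at hH
    split_ifs at hH ⊢ <;> omega
  have hMγ : Maximal r γ := by
    intro i hi1
    have hH := Happly i
    have hM := Mapply i
    rw [← hddef, hγdef, Finsupp.add_apply, Finsupp.add_apply, Finsupp.single_apply]
    simp only [Finset.mem_Ico] at hH hM
    split_ifs at hH hM ⊢ <;> omega
  have hβne : β ≠ 0 := by
    intro h
    have : β (m + 1) = 0 := by rw [h]; rfl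
    have hH := Happly (m + 1)
    rw [hβdef, Finsupp.add_apply, Finsupp.single_apply] at this
    simp only [Finset.mem_Ico] at hH
    split_ifs at this hH <;> omega
  set x := valh r β with hxdef
  have hx0 : x ≠ 0 := ne_of_gt (valh_pos h0 hnd hβne)
  obtain ⟨he, h1, h2⟩ := elast_eq h0 hd hnd hx0 rfl hvv hRβ hMγ
  refine ⟨x, valh_mem β, ?_⟩
  rw [he, hflenβ, hflenγ]

/-- casting helper -/
lemma enn_div (a b : ℕ) (hb : 0 < b) :
    ((a : ℕ) : ℝ≥0∞) / ((b : ℕ) : ℝ≥0∞) = ENNReal.ofReal ((((a : ℚ) / (b : ℚ) : ℚ)) : ℝ) := by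
  have hcast : ((((a : ℚ) / (b : ℚ) : ℚ)) : ℝ) = (a : ℝ) / (b : ℝ) := by push_cast; ring
  rw [hcast, ENNReal.ofReal_div_of_pos (by exact_mod_cast hb), ENNReal.ofReal_natCast,
    ENNReal.ofReal_natCast]

end
end PM

theorem stmt8 (r : ℚ) (h0 : 0 < r) (hd : r.den ≠ 1) (hnd : r.num = (r.den : ℤ) + 1) :
    (∀ x ∈ S r, elast r x ≠ ⊤) ∧
    {e : ℝ≥0∞ | ∃ x ∈ S r, elast r x = e} =
      {e : ℝ≥0∞ | ∃ q : ℚ, 1 ≤ q ∧ e = ENNReal.ofReal (q : ℝ)} := by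
  constructor
  · intro x hx
    by_cases hx0 : x = 0
    · subst hx0; rw [elast, if_pos rfl]; exact ENNReal.one_ne_top
    · obtain ⟨α, hα⟩ := (PM.mem_iff_exists (r := r)).1 hx
      obtain ⟨β, hvβ, _, hβ⟩ := PM.exists_reduced hnd α
      obtain ⟨γ, hvγ, _, hγ⟩ := PM.exists_maximal h0 hnd α
      obtain ⟨he, h1, h2⟩ := PM.elast_eq h0 hd hnd hx0 (hvβ.trans hα) (hvγ.trans hα) hβ hγ
      rw [he]
      exact (ENNReal.div_lt_top (ENNReal.natCast_ne_top _)
        (by exact_mod_cast (by omega : flen β ≠ 0))).ne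
  · ext e
    simp only [Set.mem_setOf_eq]
    constructor
    · rintro ⟨x, hx, rfl⟩
      by_cases hx0 : x = 0
      · refine ⟨1, le_refl 1, ?_⟩
        rw [hx0, elast, if_pos rfl]; simp
      · obtain ⟨α, hα⟩ := (PM.mem_iff_exists (r := r)).1 hx
        obtain ⟨β, hvβ, _, hβ⟩ := PM.exists_reduced hnd α
        obtain ⟨γ, hvγ, _, hγ⟩ := PM.exists_maximal h0 hnd α
        obtain ⟨he, h1, h2⟩ := PM.elast_eq h0 hd hnd hx0 (hvβ.trans hα) (hvγ.trans hα) hβ hγ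
        refine ⟨(flen γ : ℚ) / (flen β : ℚ), ?_, ?_⟩
        · rw [one_le_div (by exact_mod_cast h1 : (0:ℚ) < (flen β : ℚ))]
          exact_mod_cast h2
        · rw [he, PM.enn_div _ _ (by omega)]
    · rintro ⟨q, hq, rfl⟩
      rcases eq_or_lt_of_le hq with hq1 | hq1
      · refine ⟨1, AddSubmonoid.subset_closure ⟨0, (pow_zero r).symm⟩, ?_⟩
        have hd2 := PM.two_le_d (r := r) hd
        have hβ : PM.Reduced r (Finsupp.single 0 1) := fun i => by
          rw [Finsupp.single_apply]; split <;> omega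
        have hγ : PM.Maximal r (Finsupp.single 0 1) := fun i hi => by
          rw [Finsupp.single_apply]; split <;> omega
        have hv : PM.valh r (Finsupp.single 0 1) = 1 := by rw [PM.valh_single]; simp
        obtain ⟨he, h1, h2⟩ := PM.elast_eq h0 hd hnd one_ne_zero hv hv hβ hγ
        rw [he, PM.flen_single, ← hq1]
        simp
      · have hq0 : 0 < q := lt_trans one_pos hq1
        have hnum : ((q.num.toNat : ℕ) : ℤ) = q.num := Int.toNat_of_nonneg (le_of_lt (Rat.num_pos.2 hq0))
        have hlt : q.den < q.num.toNat := by
          have h2 : (q.den : ℤ) < q.num := by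
            by_contra hc
            push_neg at hc
            have h3 : q ≤ 1 := by
              rw [← Rat.num_div_den q, div_le_one (by exact_mod_cast q.pos)]
              exact_mod_cast hc
            linarith
          omega
        obtain ⟨x, hxS, hxe⟩ := PM.construct h0 hd hnd q.num.toNat q.den q.pos hlt
        refine ⟨x, hxS, ?_⟩
        rw [hxe, PM.enn_div _ _ (Nat.mul_pos q.pos r.pos)]
        congr 1
        have hQ : (((q.num.toNat * r.den : ℕ) : ℚ) / ((q.den * r.den : ℕ) : ℚ)) = q := by
          have hden : ((r.den : ℚ)) ≠ 0 := by exact_mod_cast r.den_nz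
          have hqden : ((q.den : ℚ)) ≠ 0 := by exact_mod_cast q.den_nz
          push_cast
          rw [mul_div_mul_right _ _ hden,
            show ((q.num.toNat : ℚ)) = ((q.num : ℚ)) from by exact_mod_cast hnum,
            Rat.num_div_den]
        rw [hQ]
end
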